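/- arXiv:1701.08418 — 3 statements merged into one kernel-verified Lean document; each statement's English description precedes it below -/
import Mathlib

section
/- Let d ≥ 3 be an odd integer and let C(d) := {(i, i+d) : 1 ≤ i ≤ d}. Then ⟨C(d)⟩ ≠ 0 and span ⟨C(d)⟩ = 4d; more precisely, the maximal exponent of ⟨C(d)⟩ is d+2 and the minimal exponent is −3d+2. -/
open Equiv LaurentPolynomial Finset

/-- `C` is an oriented linear chord diagram of `d` chords: a set of `d` ordered pairs of
integers whose entries (first and second components together) are exactly `{1, …, 2d}`.
(Together with `C.card = d` this forces all `2d` entries to be pairwise distinct.) -/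
def IsOLCD (d : ℕ) (C : Finset (ℤ × ℤ)) : Prop :=
  C.card = d ∧ (C.image Prod.fst ∪ C.image Prod.snd) = Finset.Icc 1 (2 * (d : ℤ))

/-- The set `R_c` of transpositions of `ℤ` associated to a chord `c = (i, j)` carrying the
label `lbl` (`true` = `A`, `false` = `B`). -/
def Rset (lbl : Bool) (c : ℤ × ℤ) : Set (Equiv.Perm ℤ) :=
  if lbl = decide (c.1 < c.2) then
    {Equiv.swap c.1 (c.2 - 1), Equiv.swap (c.1 - 1) c.2}
  else
    {Equiv.swap c.1 c.2, Equiv.swap (c.1 - 1) (c.2 - 1)}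

/-- The subgroup of permutations generated by `⋃_{c ∈ C} R_c`, for a state `s` of `C`. -/
def stateGroup (C : Finset (ℤ × ℤ)) (s : {c // c ∈ C} → Bool) : Subgroup (Equiv.Perm ℤ) :=
  Subgroup.closure (⋃ c : {c // c ∈ C}, Rset (s c) c.1)

/-- `Γ_s`: the number of orbits of the action of `stateGroup C s` on `{0, 1, …, 2d}`,
counted as the number of distinct orbits of elements of `{0, …, 2d}`. -/
noncomputable def Gamma (d : ℕ) (C : Finset (ℤ × ℤ)) (s : {c // c ∈ C} → Bool) : ℕ :=
  ((fun x : ℤ => MulAction.orbit (stateGroup C s) x) '' Set.Icc (0 : ℤ) (2 * d)).ncard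

/-- `⟨C|s⟩ = A^(|s⁻¹(A)| - |s⁻¹(B)|) * (-A² - A⁻²)^(Γ_s - 1)`. -/
noncomputable def bracketTerm (d : ℕ) (C : Finset (ℤ × ℤ)) (s : {c // c ∈ C} → Bool) :
    LaurentPolynomial ℤ :=
  T (((Finset.univ.filter fun c => s c = true).card : ℤ) -
      ((Finset.univ.filter fun c => s c = false).card : ℤ)) *
    (-T 2 - T (-2)) ^ (Gamma d C s - 1)

/-- The bracket polynomial `⟨C⟩ = Σ_s ⟨C|s⟩`, summing over all `2^d` states of `C`. -/
noncomputable def bracket (d : ℕ) (C : Finset (ℤ × ℤ)) : LaurentPolynomial ℤ :=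
  ∑ s : ({c // c ∈ C} → Bool), bracketTerm d C s

/-- The maximal exponent occurring in a Laurent polynomial (junk value `0` for `f = 0`). -/
noncomputable def maxDeg (f : LaurentPolynomial ℤ) : ℤ := WithBot.unbotD 0 f.coeff.support.max

/-- The minimal exponent occurring in a Laurent polynomial (junk value `0` for `f = 0`). -/
noncomputable def minDeg (f : LaurentPolynomial ℤ) : ℤ := WithTop.untopD 0 f.coeff.support.min

/-- The span of a Laurent polynomial: maximal minus minimal exponent. -/
noncomputable def spanL (f : LaurentPolynomial ℤ) : ℤ := maxDeg f - minDeg f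



section Abstract

variable {d : ℕ} {B : Finset ℤ} {orb : ℤ → Set ℤ}

/-- Claim A: going up from a B-chord `l` through A-chords. -/
lemma claimA (hsub : ∀ i ∈ B, 1 ≤ i ∧ i ≤ (d:ℤ))
    (hA : ∀ i : ℤ, 1 ≤ i → i ≤ d → i ∉ B → orb i = orb (i+d-1) ∧ orb (i-1) = orb (i+d))
    (hBe : ∀ i ∈ B, orb i = orb (i+d))
    (l : ℤ) (hl : l ∈ B) :
    ∀ n : ℕ, l + n ≤ (d:ℤ) → (∀ j : ℤ, l < j → j ≤ l + n → j ∉ B) →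
      orb (l+n) = orb l ∧ orb (l+n+d) = orb l := by
  intro n
  induction n with
  | zero => intro _ _; constructor
            · norm_num
            · have := hBe l hl; push_cast; simpa using this.symm
  | succ n ih =>
    intro hle hgap
    have hle' : l + (n:ℤ) ≤ d := by push_cast at hle ⊢; omega
    have hgap' : ∀ j : ℤ, l < j → j ≤ l + n → j ∉ B := by
      intro j h1 h2; exact hgap j h1 (by push_cast at h2 ⊢; omega)
    obtain ⟨ih1, ih2⟩ := ih hle' hgap'
    set j : ℤ := l + (n+1 : ℕ) with hj
    have hj1 : 1 ≤ j := by have := (hsub l hl).1; push_cast [hj]; omega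
    have hjd : j ≤ d := hle
    have hjB : j ∉ B := hgap j (by push_cast [hj]; omega) le_rfl
    obtain ⟨e1, e2⟩ := hA j hj1 hjd hjB
    constructor
    · rw [e1]
      have : j + d - 1 = l + (n:ℤ) + d := by push_cast [hj]; ring
      rw [this]; exact ih2
    · have : j - 1 = l + (n:ℤ) := by push_cast [hj]; ring
      rw [this] at e2
      have h2 : j + (d:ℤ) = l + ((n+1:ℕ):ℤ) + d := by push_cast [hj]; ring
      rw [h2] at e2; rw [← e2]; exact ih1

/-- Claim C: going down below the minimal B-chord `i1`. -/
lemma claimC (hsub : ∀ i ∈ B, 1 ≤ i ∧ i ≤ (d:ℤ))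
    (hA : ∀ i : ℤ, 1 ≤ i → i ≤ d → i ∉ B → orb i = orb (i+d-1) ∧ orb (i-1) = orb (i+d))
    (hB2 : ∀ i ∈ B, orb (i-1) = orb (i-1+d))
    (i1 : ℤ) (hi1 : i1 ∈ B) (hmin : ∀ j ∈ B, i1 ≤ j) :
    ∀ n : ℕ, (n:ℤ) ≤ i1 - 1 →
      orb (i1-1-n) = orb (i1-1+d) ∧ orb (i1-1-n+d) = orb (i1-1+d) := by
  intro n
  induction n with
  | zero => intro _; constructor
            · have := hB2 i1 hi1; push_cast; simpa using this
            · push_cast; norm_num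
  | succ n ih =>
    intro hle
    have hle' : (n:ℤ) ≤ i1 - 1 := by push_cast at hle; omega
    obtain ⟨ih1, ih2⟩ := ih hle'
    set j : ℤ := i1 - 1 - n with hj
    have hj1 : 1 ≤ j := by push_cast at hle; omega
    have hjd : j ≤ d := by have := (hsub i1 hi1).2; omega
    have hjB : j ∉ B := fun h => by have := hmin j h; omega
    obtain ⟨e1, e2⟩ := hA j hj1 hjd hjB
    constructor
    · have h1 : i1 - 1 - ((n+1:ℕ):ℤ) = j - 1 := by push_cast; omega
      rw [h1, e2]
      have h2 : j + (d:ℤ) = i1 - 1 - n + d := by omega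
      rw [h2]; exact ih2
    · have h1 : i1 - 1 - ((n+1:ℕ):ℤ) + d = j - 1 + d := by push_cast; omega
      rw [h1]
      have h3 : j - 1 + (d:ℤ) = j + d - 1 := by ring
      rw [h3, ← e1]; exact ih1

/-- Connectivity: every point of `[0, 2d]` is in the orbit of some element of `B`. -/
lemma connB (hB : B.Nonempty) (hsub : ∀ i ∈ B, 1 ≤ i ∧ i ≤ (d:ℤ))
    (hA : ∀ i : ℤ, 1 ≤ i → i ≤ d → i ∉ B → orb i = orb (i+d-1) ∧ orb (i-1) = orb (i+d))
    (hBe : ∀ i ∈ B, orb i = orb (i+d)) (hB2 : ∀ i ∈ B, orb (i-1) = orb (i-1+d)) :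
    ∀ x : ℤ, 0 ≤ x → x ≤ 2*d → ∃ i ∈ B, orb x = orb i := by
  -- main claim for y ∈ [0,d], both y and y+d
  have main : ∀ y : ℤ, 0 ≤ y → y ≤ d → ∃ i ∈ B, orb y = orb i ∧ orb (y+d) = orb i := by
    intro y hy0 hyd
    by_cases hne : (B.filter (· ≤ y)).Nonempty
    · set l := (B.filter (· ≤ y)).max' hne with hl
      have hlmem : l ∈ B.filter (· ≤ y) := Finset.max'_mem _ hne
      have hlB : l ∈ B := (Finset.mem_filter.mp hlmem).1
      have hly : l ≤ y := by simpa using (Finset.mem_filter.mp hlmem).2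
      have hgap : ∀ j : ℤ, l < j → j ≤ l + ((y - l).toNat : ℤ) → j ∉ B := by
        intro j h1 h2 hjB
        have hjy : j ≤ y := by omega
        have := Finset.le_max' (B.filter (· ≤ y)) j (Finset.mem_filter.mpr ⟨hjB, hjy⟩)
        omega
      have hsum : l + ((y - l).toNat : ℤ) = y := by omega
      obtain ⟨c1, c2⟩ := claimA hsub hA hBe l hlB (y - l).toNat (by omega) hgap
      rw [hsum] at c1 c2
      exact ⟨l, hlB, c1, c2⟩
    · -- y below the minimum
      set i1 := B.min' hB with hi1def
      have hi1B : i1 ∈ B := Finset.min'_mem _ hB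
      have hmin : ∀ j ∈ B, i1 ≤ j := fun j hj => Finset.min'_le _ j hj
      have hyi1 : y < i1 := by
        by_contra h
        exact hne ⟨i1, Finset.mem_filter.mpr ⟨hi1B, show i1 ≤ y by omega⟩⟩
      have hi11 : 1 ≤ i1 := (hsub i1 hi1B).1
      -- claimC at n = i1-1-y
      have h1 : ((i1 - 1 - y).toNat : ℤ) ≤ i1 - 1 := by omega
      obtain ⟨c1, c2⟩ := claimC hsub hA hB2 i1 hi1B hmin (i1-1-y).toNat h1
      have hy' : i1 - 1 - ((i1 - 1 - y).toNat : ℤ) = y := by omega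
      rw [hy'] at c1 c2
      -- link: orb (i1-1+d) = orb (max' B)
      have h2 : ((i1 - 1).toNat : ℤ) ≤ i1 - 1 := by omega
      obtain ⟨c3, c4⟩ := claimC hsub hA hB2 i1 hi1B hmin (i1-1).toNat h2
      have h0 : i1 - 1 - ((i1-1).toNat : ℤ) = 0 := by omega
      rw [h0] at c3 c4
      -- c4 : orb (0 + d) = orb (i1-1+d)
      set m := B.max' hB with hmdef
      have hmB : m ∈ B := Finset.max'_mem _ hB
      have hgapm : ∀ j : ℤ, m < j → j ≤ m + (((d:ℤ) - m).toNat : ℤ) → j ∉ B := by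
        intro j hj _ hjB
        have := Finset.le_max' B j hjB; omega
      have hmd : m + (((d:ℤ) - m).toNat : ℤ) ≤ (d:ℤ) := by
        have := (hsub m hmB).2; omega
      obtain ⟨c5, _⟩ := claimA hsub hA hBe m hmB ((d:ℤ) - m).toNat hmd hgapm
      have hde : m + (((d:ℤ) - m).toNat : ℤ) = (d:ℤ) := by have := (hsub m hmB).2; omega
      rw [hde] at c5
      -- c5 : orb d = orb m ; c4 : orb (0+d) = orb (i1-1+d)
      have hX : orb (i1 - 1 + d) = orb m := by
        rw [← c4]; simpa using c5
      exact ⟨m, hmB, by rw [c1, hX], by rw [c2, hX]⟩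
  intro x hx0 hx2
  by_cases hxd : x ≤ d
  · obtain ⟨i, hi, h1, _⟩ := main x hx0 hxd
    exact ⟨i, hi, h1⟩
  · obtain ⟨i, hi, _, h2⟩ := main (x - d) (by omega) (by omega)
    have : x - (d:ℤ) + d = x := by ring
    rw [this] at h2
    exact ⟨i, hi, h2⟩

end Abstract

section Abstract2
variable {d : ℕ} {B : Finset ℤ} {orb : ℤ → Set ℤ}

lemma countB (hB : B.Nonempty) (hsub : ∀ i ∈ B, 1 ≤ i ∧ i ≤ (d:ℤ))
    (hA : ∀ i : ℤ, 1 ≤ i → i ≤ d → i ∉ B → orb i = orb (i+d-1) ∧ orb (i-1) = orb (i+d))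
    (hBe : ∀ i ∈ B, orb i = orb (i+d)) (hB2 : ∀ i ∈ B, orb (i-1) = orb (i-1+d))
    (hinj : ∀ i ∈ B, ∀ j ∈ B, orb i = orb j → i = j) :
    (orb '' Set.Icc (0:ℤ) (2*d)).ncard = B.card := by
  have him : orb '' Set.Icc (0:ℤ) (2*d) = orb '' (B : Set ℤ) := by
    apply Set.Subset.antisymm
    · rintro _ ⟨x, hx, rfl⟩
      obtain ⟨i, hi, hoi⟩ := connB hB hsub hA hBe hB2 x hx.1 hx.2
      exact ⟨i, hi, hoi.symm⟩
    · rintro _ ⟨i, hi, rfl⟩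
      exact ⟨i, ⟨by have := (hsub i hi).1; omega, by have := (hsub i hi).2; omega⟩, rfl⟩
  have hinj' : Set.InjOn orb (B : Set ℤ) :=
    fun i hi j hj h => hinj i (Finset.mem_coe.mp hi) j (Finset.mem_coe.mp hj) h
  rw [him, Set.ncard_image_of_injOn hinj', Set.ncard_coe_finset]

lemma count0 (hd3 : 3 ≤ d) (hd : Odd d)
    (hA : ∀ i : ℤ, 1 ≤ i → i ≤ d → orb i = orb (i+d-1) ∧ orb (i-1) = orb (i+d))
    (hne : orb 0 ≠ orb 1) :
    (orb '' Set.Icc (0:ℤ) (2*d)).ncard = 2 := by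
  obtain ⟨k, hk⟩ := hd
  have step2 : ∀ y : ℤ, 0 ≤ y → y ≤ (d:ℤ) - 2 → orb (y+2) = orb y := by
    intro y h0 h2
    have e1 := (hA (y+2) (by omega) (by omega)).1
    have e2 := (hA (y+1) (by omega) (by omega)).2
    have a1 : y + 2 + (d:ℤ) - 1 = y + 1 + d := by ring
    have a2 : y + 1 - 1 = y := by ring
    rw [a1] at e1; rw [a2] at e2
    rw [e1, ← e2]
  have low : ∀ n : ℕ, (n:ℤ) ≤ d → orb n = orb ((n:ℤ) % 2) := by
    intro n
    induction n using Nat.strong_induction_on with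
    | _ n ih =>
      intro hn
      match n, hn with
      | 0, _ => norm_num
      | 1, _ => norm_num
      | (m+2), hn =>
        have h1 : ((m:ℤ)+2) ≤ d := by push_cast at hn ⊢; omega
        have e := step2 m (by positivity) (by omega)
        have e2 := ih m (by omega) (by omega)
        have a1 : ((m+2:ℕ):ℤ) = (m:ℤ) + 2 := by push_cast; ring
        have a2 : ((m+2:ℕ):ℤ) % 2 = (m:ℤ) % 2 := by omega
        rw [a2, a1, e, e2]
  have conn : ∀ x : ℤ, 0 ≤ x → x ≤ 2*d → orb x = orb (x % 2) := by
    intro x h0 h2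
    by_cases hxd : x ≤ d
    · have := low x.toNat (by omega)
      have hx : ((x.toNat : ℤ)) = x := by omega
      rw [hx] at this; exact this
    · by_cases hx2 : x ≤ 2*(d:ℤ) - 1
      · have e1 := (hA (x - d + 1) (by omega) (by omega)).1
        have a1 : x - (d:ℤ) + 1 + d - 1 = x := by ring
        rw [a1] at e1
        have := low (x - d + 1).toNat (by omega)
        have hx : (((x - (d:ℤ) + 1).toNat : ℤ)) = x - d + 1 := by omega
        rw [hx] at this
        have a2 : (x - (d:ℤ) + 1) % 2 = x % 2 := by omega
        rw [a2] at this
        rw [← e1, this]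
      · have hx : x = 2*(d:ℤ) := by omega
        subst hx
        have e2 := (hA d (by omega) (by omega)).2
        rw [show (d:ℤ) + d = 2*(d:ℤ) by ring] at e2
        have hl := low (d-1) (by omega)
        rw [show (((d-1:ℕ)):ℤ) = (d:ℤ) - 1 by omega,
          show ((d:ℤ)-1) % 2 = 0 by omega] at hl
        rw [show (2*(d:ℤ)) % 2 = 0 by omega, ← e2]
        exact hl
  have him : orb '' Set.Icc (0:ℤ) (2*d) = {orb 0, orb 1} := by
    apply Set.Subset.antisymm
    · rintro _ ⟨x, hx, rfl⟩
      rw [conn x hx.1 hx.2]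
      have : x % 2 = 0 ∨ x % 2 = 1 := by omega
      rcases this with h | h <;> rw [h] <;> simp
    · rintro y hy
      rcases hy with h | h
      · exact ⟨0, ⟨le_refl _, by positivity⟩, h.symm⟩
      · exact ⟨1, ⟨by norm_num, by push_cast; omega⟩, by rw [h]⟩
  rw [him, Set.ncard_pair hne]

end Abstract2
section Concrete

def Cd (d : ℕ) : Finset (ℤ × ℤ) := (Finset.Icc 1 d).image fun i : ℕ => ((i : ℤ), (i : ℤ) + d)

lemma mem_Cd {d : ℕ} {c : ℤ × ℤ} :
    c ∈ Cd d ↔ ∃ i : ℤ, 1 ≤ i ∧ i ≤ d ∧ c = (i, i + d) := by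
  constructor
  · intro h
    obtain ⟨n, hn, rfl⟩ := Finset.mem_image.mp h
    rw [Finset.mem_Icc] at hn
    exact ⟨n, by exact_mod_cast hn.1, by exact_mod_cast hn.2, rfl⟩
  · rintro ⟨i, h1, h2, rfl⟩
    refine Finset.mem_image.mpr ⟨i.toNat, Finset.mem_Icc.mpr ⟨by omega, by omega⟩, ?_⟩
    have : ((i.toNat : ℤ)) = i := by omega
    rw [this]

lemma chord_mem {d : ℕ} {i : ℤ} (h1 : 1 ≤ i) (h2 : i ≤ d) : (i, i + (d:ℤ)) ∈ Cd d :=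
  mem_Cd.mpr ⟨i, h1, h2, rfl⟩

variable {d : ℕ} (s : {c // c ∈ Cd d} → Bool)

/-- state as a function of the left endpoint -/
noncomputable def sF (i : ℤ) : Bool :=
  if h : (i, i + (d:ℤ)) ∈ Cd d then s ⟨_, h⟩ else true

lemma sF_eq {i : ℤ} (h : (i, i + (d:ℤ)) ∈ Cd d) : sF s i = s ⟨_, h⟩ := dif_pos h

/-- the set of B-chords (left endpoints) -/
noncomputable def Bs : Finset ℤ :=
  ((Finset.univ.filter fun c : {c // c ∈ Cd d} => s c = false)).image fun c => c.1.1

lemma mem_Bs {i : ℤ} (hd : 1 ≤ d) : i ∈ Bs s ↔ 1 ≤ i ∧ i ≤ d ∧ sF s i = false := by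
  constructor
  · intro h
    obtain ⟨c, hc, rfl⟩ := Finset.mem_image.mp h
    rw [Finset.mem_filter] at hc
    obtain ⟨j, hj1, hj2, hcj⟩ := mem_Cd.mp c.2
    have h1 : c.1.1 = j := by rw [hcj]
    simp only [h1]
    refine ⟨hj1, hj2, ?_⟩
    rw [sF_eq s (chord_mem hj1 hj2)]
    have hce : c = ⟨(j, j + d), chord_mem hj1 hj2⟩ := Subtype.ext hcj
    rw [← hce]; exact hc.2
  · rintro ⟨h1, h2, h3⟩
    refine Finset.mem_image.mpr ⟨⟨(i, i + d), chord_mem h1 h2⟩, ?_, rfl⟩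
    rw [Finset.mem_filter]
    exact ⟨Finset.mem_univ _, by rw [← sF_eq s (chord_mem h1 h2)]; exact h3⟩

lemma card_Bs : (Bs s).card = ((Finset.univ.filter fun c : {c // c ∈ Cd d} => s c = false)).card := by
  apply Finset.card_image_of_injOn
  intro c _ c' _ h
  obtain ⟨j, _, _, hcj⟩ := mem_Cd.mp c.2
  obtain ⟨j', _, _, hcj'⟩ := mem_Cd.mp c'.2
  have h1 : c.1.1 = j := by rw [hcj]
  have h1' : c'.1.1 = j' := by rw [hcj']
  have hjj : j = j' := by rw [← h1, ← h1']; exact h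
  apply Subtype.ext
  rw [hcj, hcj', hjj]

/-- the generating set -/
def genS : Set (Equiv.Perm ℤ) := ⋃ c : {c // c ∈ Cd d}, Rset (s c) c.1

lemma Rset_true {i j : ℤ} (h : i < j) :
    Rset true (i, j) = {Equiv.swap i (j-1), Equiv.swap (i-1) j} := by
  simp [Rset, h]

lemma Rset_false {i j : ℤ} (h : i < j) :
    Rset false (i, j) = {Equiv.swap i j, Equiv.swap (i-1) (j-1)} := by
  simp [Rset, h]

lemma gen_A {i : ℤ} (hd : 1 ≤ d) (h1 : 1 ≤ i) (h2 : i ≤ d) (hs : sF s i = true) :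
    Equiv.swap i (i + d - 1) ∈ genS s ∧ Equiv.swap (i-1) (i + d) ∈ genS s := by
  have hm := chord_mem h1 h2
  have hlt : i < i + (d:ℤ) := by omega
  have hR : Rset (s ⟨(i, i + d), hm⟩) (i, i + (d:ℤ)) =
      {Equiv.swap i (i + d - 1), Equiv.swap (i-1) (i + d)} := by
    rw [← sF_eq s hm] at *
    rw [hs, Rset_true hlt]
  constructor
  · exact Set.mem_iUnion.mpr ⟨⟨(i, i+d), hm⟩, by rw [hR]; left; rfl⟩
  · exact Set.mem_iUnion.mpr ⟨⟨(i, i+d), hm⟩, by rw [hR]; right; rfl⟩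

lemma gen_B {i : ℤ} (hd : 1 ≤ d) (h1 : 1 ≤ i) (h2 : i ≤ d) (hs : sF s i = false) :
    Equiv.swap i (i + d) ∈ genS s ∧ Equiv.swap (i-1) (i + d - 1) ∈ genS s := by
  have hm := chord_mem h1 h2
  have hlt : i < i + (d:ℤ) := by omega
  have hR : Rset (s ⟨(i, i + d), hm⟩) (i, i + (d:ℤ)) =
      {Equiv.swap i (i + d), Equiv.swap (i-1) (i + d - 1)} := by
    rw [← sF_eq s hm] at *
    rw [hs, Rset_false hlt]
  constructor
  · exact Set.mem_iUnion.mpr ⟨⟨(i, i+d), hm⟩, by rw [hR]; left; rfl⟩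
  · exact Set.mem_iUnion.mpr ⟨⟨(i, i+d), hm⟩, by rw [hR]; right; rfl⟩

lemma gen_cases {σ : Equiv.Perm ℤ} (h : σ ∈ genS s) :
    ∃ i : ℤ, 1 ≤ i ∧ i ≤ d ∧
      ((sF s i = true ∧ (σ = Equiv.swap i (i+d-1) ∨ σ = Equiv.swap (i-1) (i+d))) ∨
       (sF s i = false ∧ (σ = Equiv.swap i (i+d) ∨ σ = Equiv.swap (i-1) (i+d-1)))) := by
  obtain ⟨c, hc⟩ := Set.mem_iUnion.mp h
  obtain ⟨i, h1, h2, hcj⟩ := mem_Cd.mp c.2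
  have hlt : i < i + (d:ℤ) := by omega
  have hcs : s c = sF s i := by
    rw [sF_eq s (chord_mem h1 h2)]
    congr 1
    exact Subtype.ext hcj
  refine ⟨i, h1, h2, ?_⟩
  rw [hcj, hcs] at hc
  cases hb : sF s i with
  | true =>
    rw [hb, Rset_true hlt] at hc
    left
    refine ⟨rfl, ?_⟩
    rcases hc with h | h
    · left; rw [h]
    · right; rw [Set.mem_singleton_iff] at h; rw [h]
  | false =>
    rw [hb, Rset_false hlt] at hc
    right
    refine ⟨rfl, ?_⟩
    rcases hc with h | h
    · left; rw [h]
    · right; rw [Set.mem_singleton_iff] at h; rw [h]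

/-- the orbit map -/
noncomputable def orbS : ℤ → Set ℤ := fun x => MulAction.orbit (stateGroup (Cd d) s) x

lemma orb_swap {a b : ℤ} (h : Equiv.swap a b ∈ genS s) : orbS s a = orbS s b := by
  have hg : Equiv.swap a b ∈ stateGroup (Cd d) s := Subgroup.subset_closure h
  apply MulAction.orbit_eq_iff.mpr
  exact ⟨⟨Equiv.swap a b, hg⟩, by
    show (Equiv.swap a b) b = a
    exact Equiv.swap_apply_right a b⟩

lemma invariant_orb {F : ℤ → ℤ} (hF : ∀ σ ∈ genS s, ∀ x, F (σ x) = F x) :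
    ∀ x y : ℤ, y ∈ orbS s x → F y = F x := by
  have key : ∀ g ∈ stateGroup (Cd d) s, ∀ x, F (g x) = F x := by
    intro g hg
    induction hg using Subgroup.closure_induction with
    | mem σ hσ => exact hF σ hσ
    | one => intro x; rfl
    | mul g h _ _ hg hh => intro x
                           have : (g * h) x = g (h x) := rfl
                           rw [this, hg, hh]
    | inv g _ hg => intro x
                    have := hg (g⁻¹ x)
                    simpa using this.symm
  rintro x y ⟨g, rfl⟩
  exact key g g.2 x

lemma swap_invariant {F : ℤ → ℤ} {a b : ℤ} (h : F a = F b) (x : ℤ) :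
    F (Equiv.swap a b x) = F x := by
  rw [Equiv.swap_apply_def]
  split_ifs with h1 h2
  · rw [h1, h]
  · rw [h2, h]
  · rfl

end Concrete
section Gval

variable {d : ℕ} (s : {c // c ∈ Cd d} → Bool)

noncomputable def gB (y : ℤ) : ℤ :=
  WithBot.unbotD (WithBot.unbotD 0 (Bs s).max) ((Bs s).filter (· ≤ y)).max

lemma gB_def (y : ℤ) :
    gB s y = WithBot.unbotD (WithBot.unbotD 0 (Bs s).max) ((Bs s).filter (· ≤ y)).max := rfl

lemma m_mem (hB : (Bs s).Nonempty) : WithBot.unbotD 0 (Bs s).max ∈ Bs s := by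
  obtain ⟨a, ha⟩ := Finset.max_of_nonempty hB
  rw [ha, WithBot.unbotD_coe]
  exact Finset.mem_of_max ha

lemma g_low (hd : 1 ≤ d) {y : ℤ} (hy : y < 1) : gB s y = WithBot.unbotD 0 (Bs s).max := by
  have he : (Bs s).filter (· ≤ y) = ∅ := by
    apply Finset.filter_eq_empty_iff.mpr
    intro x hx
    have := ((mem_Bs s hd).mp hx).1
    omega
  rw [gB_def, he]
  rfl

lemma g_d (hd : 1 ≤ d) : gB s (d : ℤ) = WithBot.unbotD 0 (Bs s).max := by
  have he : (Bs s).filter (· ≤ (d:ℤ)) = Bs s := by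
    apply Finset.filter_true_of_mem
    intro x hx
    have := ((mem_Bs s hd).mp hx).2.1
    exact this
  rw [gB_def, he]
  cases hmax : (Bs s).max with
  | bot => rfl
  | coe v => rfl

lemma g_self {i : ℤ} (hi : i ∈ Bs s) : gB s i = i := by
  have hmax : ((Bs s).filter (· ≤ i)).max = (i : WithBot ℤ) := by
    apply le_antisymm
    · apply Finset.max_le
      intro b hb
      exact WithBot.coe_le_coe.mpr (Finset.mem_filter.mp hb).2
    · exact Finset.le_max (Finset.mem_filter.mpr ⟨hi, le_rfl⟩)
  rw [gB_def, hmax]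
  rfl

lemma g_step {i : ℤ} (hi : i ∉ Bs s) : gB s i = gB s (i-1) := by
  have he : (Bs s).filter (· ≤ i) = (Bs s).filter (· ≤ i - 1) := by
    apply Finset.filter_congr
    intro x hx
    constructor
    · intro h
      rcases lt_or_eq_of_le h with h' | h'
      · omega
      · exact absurd (h' ▸ hx) hi
    · intro h; omega
  rw [gB_def, gB_def, he]

/-- the full invariant label function -/
noncomputable def FB (x : ℤ) : ℤ := gB s (if x ≤ (d:ℤ) then x else x - d)

lemma FB_low {x : ℤ} (hx : x ≤ (d:ℤ)) : FB s x = gB s x := by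
  unfold FB; rw [if_pos hx]

lemma FB_high {x : ℤ} (hx : ¬ x ≤ (d:ℤ)) : FB s x = gB s (x - d) := by
  unfold FB; rw [if_neg hx]

set_option maxHeartbeats 1600000 in
lemma FB_inv (hd : 1 ≤ d) (hB : (Bs s).Nonempty) :
    ∀ σ ∈ genS s, ∀ x, FB s (σ x) = FB s x := by
  intro σ hσ
  obtain ⟨i, h1, h2, hcase⟩ := gen_cases s hσ
  have hFi : FB s i = gB s i := FB_low s h2
  have hFi1 : FB s (i-1) = gB s (i-1) := FB_low s (by omega)
  have hFid : FB s (i+d) = gB s i := by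
    rw [FB_high s (by omega)]
    congr 1; ring
  rcases hcase with ⟨hs, he⟩ | ⟨hs, he⟩
  · -- A chord: i ∉ Bs
    have hiB : i ∉ Bs s := fun h => by
      have := ((mem_Bs s hd).mp h).2.2; rw [hs] at this; exact absurd this (by simp)
    rcases he with rfl | rfl
    · -- swap i (i+d-1)
      have key : FB s i = FB s (i + d - 1) := by
        by_cases hi1 : i = 1
        · subst hi1
          have h' : (1:ℤ) + d - 1 = (d:ℤ) := by ring
          rw [h', hFi, FB_low s le_rfl, g_d s hd, g_step s hiB]
          exact g_low s hd (by norm_num)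
        · have h' : ¬ (i + (d:ℤ) - 1 ≤ d) := by omega
          rw [hFi, FB_high s h', g_step s hiB]
          congr 1; ring
      exact swap_invariant key
    · -- swap (i-1) (i+d)
      have key : FB s (i-1) = FB s (i + d) := by
        rw [hFi1, hFid, g_step s hiB]
      exact swap_invariant key
  · -- B chord: i ∈ Bs
    have hiB : i ∈ Bs s := (mem_Bs s hd).mpr ⟨h1, h2, hs⟩
    rcases he with rfl | rfl
    · -- swap i (i+d)
      have key : FB s i = FB s (i + d) := by rw [hFi, hFid]
      exact swap_invariant key
    · -- swap (i-1) (i+d-1)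
      have key : FB s (i-1) = FB s (i + d - 1) := by
        by_cases hi1 : i = 1
        · subst hi1
          have h' : (1:ℤ) + d - 1 = (d:ℤ) := by ring
          rw [h', hFi1, FB_low s le_rfl, g_d s hd]
          exact g_low s hd (by norm_num)
        · have h' : ¬ (i + (d:ℤ) - 1 ≤ d) := by omega
          rw [hFi1, FB_high s h']
          congr 1; ring
      exact swap_invariant key

lemma gamma_pos (hd : 1 ≤ d) (hB : (Bs s).Nonempty) :
    Gamma d (Cd d) s = (Bs s).card := by
  have hsub : ∀ i ∈ Bs s, 1 ≤ i ∧ i ≤ (d:ℤ) := by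
    intro i hi
    have := (mem_Bs s hd).mp hi
    exact ⟨this.1, this.2.1⟩
  have hA : ∀ i : ℤ, 1 ≤ i → i ≤ d → i ∉ Bs s →
      orbS s i = orbS s (i+d-1) ∧ orbS s (i-1) = orbS s (i+d) := by
    intro i h1 h2 hiB
    have hs : sF s i = true := by
      rcases Bool.eq_false_or_eq_true (sF s i) with h | h
      · exact h
      · exact absurd ((mem_Bs s hd).mpr ⟨h1, h2, h⟩) hiB
    obtain ⟨e1, e2⟩ := gen_A s hd h1 h2 hs
    exact ⟨orb_swap s e1, orb_swap s e2⟩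
  have hBedges : ∀ i ∈ Bs s, (orbS s i = orbS s (i+d)) ∧ (orbS s (i-1) = orbS s (i-1+d)) := by
    intro i hi
    obtain ⟨g1, g2, g3⟩ := (mem_Bs s hd).mp hi
    obtain ⟨e1, e2⟩ := gen_B s hd g1 g2 g3
    refine ⟨orb_swap s e1, ?_⟩
    have := orb_swap s e2
    rw [this]; congr 1; ring
  have hinj : ∀ i ∈ Bs s, ∀ j ∈ Bs s, orbS s i = orbS s j → i = j := by
    intro i hi j hj h
    have hmem : i ∈ orbS s j := by
      rw [← h]; exact MulAction.mem_orbit_self i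
    have := invariant_orb s (FB_inv s hd hB) j i hmem
    rw [FB_low s (hsub i hi).2, FB_low s (hsub j hj).2, g_self s hi, g_self s hj] at this
    exact this
  exact countB hB hsub hA (fun i hi => (hBedges i hi).1) (fun i hi => (hBedges i hi).2) hinj

lemma gamma_zero (hd3 : 3 ≤ d) (hd : Odd d) (hB : Bs s = ∅) :
    Gamma d (Cd d) s = 2 := by
  have hd1 : 1 ≤ d := by omega
  have hsA : ∀ i : ℤ, 1 ≤ i → i ≤ d → sF s i = true := by
    intro i h1 h2
    rcases Bool.eq_false_or_eq_true (sF s i) with h | h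
    · exact h
    · have : i ∈ Bs s := (mem_Bs s hd1).mpr ⟨h1, h2, h⟩
      rw [hB] at this; exact absurd this (Finset.notMem_empty i)
  have hA : ∀ i : ℤ, 1 ≤ i → i ≤ d →
      orbS s i = orbS s (i+d-1) ∧ orbS s (i-1) = orbS s (i+d) := by
    intro i h1 h2
    obtain ⟨e1, e2⟩ := gen_A s hd1 h1 h2 (hsA i h1 h2)
    exact ⟨orb_swap s e1, orb_swap s e2⟩
  have hne : orbS s 0 ≠ orbS s 1 := by
    intro h
    obtain ⟨k, hk⟩ := hd
    have hinv : ∀ σ ∈ genS s, ∀ x, (fun z : ℤ => z % 2) (σ x) = (fun z : ℤ => z % 2) x := by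
      intro σ hσ
      obtain ⟨i, h1, h2, hcase⟩ := gen_cases s hσ
      rcases hcase with ⟨_, he⟩ | ⟨hs, _⟩
      · rcases he with rfl | rfl
        · refine swap_invariant (F := fun z : ℤ => z % 2) ?_
          show i % 2 = (i + (d:ℤ) - 1) % 2
          omega
        · refine swap_invariant (F := fun z : ℤ => z % 2) ?_
          show (i - 1) % 2 = (i + (d:ℤ)) % 2
          omega
      · rw [hsA i h1 h2] at hs; exact absurd hs (by simp)
    have hmem : (0:ℤ) ∈ orbS s 1 := by rw [← h]; exact MulAction.mem_orbit_self 0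
    have h01 := invariant_orb s (F := fun z : ℤ => z % 2) hinv 1 0 hmem
    norm_num at h01
  exact count0 hd3 hd hA hne

end Gval
section BracketSum


/-- abbreviation for δ -/
noncomputable def del : LaurentPolynomial ℤ := -T 2 - T (-2)

lemma card_Cd {d : ℕ} : (Cd d).card = d := by
  rw [Cd, Finset.card_image_of_injective _ (fun a b h => by
    simp only [Prod.mk.injEq] at h
    exact_mod_cast h.1)]
  rw [Nat.card_Icc]
  omega

lemma bracketTerm_eq {d : ℕ} (hd3 : 3 ≤ d) (hdo : Odd d) (s : {c // c ∈ Cd d} → Bool) :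
    bracketTerm d (Cd d) s =
      T ((d:ℤ) - 2 * ((Finset.univ.filter fun c => s c = false).card : ℤ)) *
        del ^ (if (Finset.univ.filter fun c => s c = false).card = 0 then 1
               else (Finset.univ.filter fun c => s c = false).card - 1) := by
  have hd1 : 1 ≤ d := by omega
  set b := (Finset.univ.filter fun c : {c // c ∈ Cd d} => s c = false).card with hb
  have hab : (Finset.univ.filter fun c : {c // c ∈ Cd d} => s c = true).card + b = d := by
    rw [hb]
    have hfc : (Finset.univ.filter fun a : {c // c ∈ Cd d} => ¬ s a = true)
        = (Finset.univ.filter fun c => s c = false) := by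
      apply Finset.filter_congr
      intro c _
      simp [Bool.not_eq_true]
    have h2 := Finset.card_filter_add_card_filter_not
      (s := (Finset.univ : Finset {c // c ∈ Cd d})) (p := fun c => s c = true)
    rw [Finset.card_univ, Fintype.card_coe, card_Cd, hfc] at h2
    exact h2
  have hgamma : Gamma d (Cd d) s = if b = 0 then 2 else b := by
    by_cases h0 : b = 0
    · rw [if_pos h0]
      apply gamma_zero s hd3 hdo
      have : (Bs s).card = 0 := by rw [card_Bs s, ← hb, h0]
      exact Finset.card_eq_zero.mp this
    · rw [if_neg h0]
      have hne : (Bs s).Nonempty := by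
        rw [← Finset.card_pos, card_Bs s, ← hb]
        omega
      rw [gamma_pos s hd1 hne, card_Bs s, ← hb]
  rw [bracketTerm, hgamma, ← hb]
  have he : ((Finset.univ.filter fun c : {c // c ∈ Cd d} => s c = true).card : ℤ) - (b:ℤ)
      = (d:ℤ) - 2 * b := by
    have : ((Finset.univ.filter fun c : {c // c ∈ Cd d} => s c = true).card : ℤ) = (d:ℤ) - b := by
      omega
    rw [this]; ring
  rw [he]
  have hexp : (if b = 0 then 2 else b) - 1 = if b = 0 then 1 else b - 1 := by
    by_cases h0 : b = 0 <;> simp [h0]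
  rw [hexp]
  rfl

/-- the states-to-subsets equivalence -/
def stEquiv (X : Type*) [Fintype X] [DecidableEq X] : (X → Bool) ≃ Finset X where
  toFun s := Finset.univ.filter (fun c => s c = false)
  invFun A := fun c => ! decide (c ∈ A)
  left_inv s := by
    funext c
    by_cases h : s c = false <;> simp [h]
  right_inv A := by
    ext c
    simp

lemma bracket_sum_eq {d : ℕ} (hd3 : 3 ≤ d) (hdo : Odd d) :
    bracket d (Cd d) = ∑ k ∈ Finset.range (d+1),
      (d.choose k) • (T ((d:ℤ) - 2 * k) * del ^ (if k = 0 then 1 else k - 1)) := by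
  rw [bracket]
  have h1 : ∀ s : {c // c ∈ Cd d} → Bool, bracketTerm d (Cd d) s =
      (fun A : Finset {c // c ∈ Cd d} =>
        T ((d:ℤ) - 2 * A.card) * del ^ (if A.card = 0 then 1 else A.card - 1))
        (stEquiv _ s) := fun s => bracketTerm_eq hd3 hdo s
  rw [Finset.sum_congr rfl (fun s _ => h1 s)]
  rw [Equiv.sum_comp (stEquiv ({c // c ∈ Cd d}))
    (fun A => T ((d:ℤ) - 2 * A.card) * del ^ (if A.card = 0 then 1 else A.card - 1))]
  rw [← Finset.powerset_univ, Finset.sum_powerset]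
  rw [Finset.card_univ, Fintype.card_coe, card_Cd]
  apply Finset.sum_congr rfl
  intro k _
  have h3 := Finset.sum_powersetCard k (Finset.univ : Finset {c // c ∈ Cd d})
    (fun m => T ((d:ℤ) - 2*m) * del ^ (if m = 0 then 1 else m - 1))
  rw [Finset.card_univ, Fintype.card_coe, card_Cd] at h3
  exact h3

end BracketSum
section DelBracket

lemma TT {a b : ℤ} : (T a : LaurentPolynomial ℤ) * T b = T (a + b) := (T_add a b).symm

lemma del_sq : (del : LaurentPolynomial ℤ)^2 = T 4 + 2 + T (-4) := by
  have e1 : (T 2 : LaurentPolynomial ℤ) * T 2 = T 4 := by rw [TT]; norm_num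
  have e2 : (T 2 : LaurentPolynomial ℤ) * T (-2) = 1 := by rw [TT]; norm_num
  have e3 : (T (-2) : LaurentPolynomial ℤ) * T (-2) = T (-4) := by rw [TT]; norm_num
  calc (del : LaurentPolynomial ℤ)^2
      = T 2 * T 2 + 2*(T 2 * T (-2)) + T (-2) * T (-2) := by unfold del; ring
    _ = T 4 + 2 + T (-4) := by rw [e1, e2, e3]; ring

lemma hbinom (d : ℕ) : (T (-1) * del + T 1 : LaurentPolynomial ℤ)^d =
    ∑ k ∈ Finset.range (d+1), d.choose k • (T ((d:ℤ) - 2*k) * del^k) := by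
  rw [add_pow]
  apply Finset.sum_congr rfl
  intro k hk
  have hkd : k ≤ d := by rw [Finset.mem_range] at hk; omega
  rw [mul_pow, T_pow, T_pow, nsmul_eq_mul]
  have h1 : (T ((k:ℤ) * -1) : LaurentPolynomial ℤ) * del ^ k * T ((((d - k):ℕ):ℤ) * 1)
      = T ((d:ℤ) - 2*k) * del^k := by
    rw [mul_right_comm, TT]
    congr 2
    push_cast [hkd]
    ring
  rw [h1]
  ring

lemma del_mul_bracket {d : ℕ} (hd3 : 3 ≤ d) (hdo : Odd d) :
    del * bracket d (Cd d) =
      T ((d:ℤ)+4) + T (d:ℤ) + T ((d:ℤ)-4) - T (-3*(d:ℤ)) := by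
  rw [bracket_sum_eq hd3 hdo, Finset.mul_sum]
  have hterm : ∀ k, del * (d.choose k • (T ((d:ℤ) - 2 * k) * del ^ (if k = 0 then 1 else k - 1)))
      = d.choose k • (del * (T ((d:ℤ) - 2 * k) * del ^ (if k = 0 then 1 else k - 1))) :=
    fun k => mul_smul_comm _ _ _
  rw [Finset.sum_congr rfl (fun k _ => hterm k)]
  have hd1 : 1 ≤ d := by omega
  -- peel off k = 0
  rw [Finset.sum_range_succ' _ d]
  have htail : ∀ i, d.choose (i+1) • (del * (T ((d:ℤ) - 2 * (i+1:ℕ)) * del ^ (if (i+1:ℕ) = 0 then 1 else (i+1) - 1)))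
      = d.choose (i+1) • (T ((d:ℤ) - 2*((i+1:ℕ):ℤ)) * del^(i+1)) := by
    intro i
    congr 1
    rw [if_neg (Nat.succ_ne_zero i)]
    have : (i + 1) - 1 = i := by omega
    rw [this]
    ring
  rw [Finset.sum_congr rfl (fun i _ => htail i)]
  have hzero : d.choose 0 • (del * (T ((d:ℤ) - 2 * (0:ℕ)) * del ^ (if (0:ℕ) = 0 then 1 else 0 - 1)))
      = T (d:ℤ) * del^2 := by
    rw [Nat.choose_zero_right, one_smul, if_pos rfl]
    push_cast
    ring_nf
  rw [hzero]
  have hsum0 : (∑ i ∈ Finset.range d, d.choose (i+1) • (T ((d:ℤ) - 2*((i+1:ℕ):ℤ)) * del^(i+1)))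
      = (T (-1) * del + T 1 : LaurentPolynomial ℤ)^d - T (d:ℤ) := by
    rw [hbinom d, Finset.sum_range_succ' _ d, Nat.choose_zero_right, one_smul]
    have hz : (T ((d:ℤ) - 2*((0:ℕ):ℤ)) : LaurentPolynomial ℤ) * del^0 = T (d:ℤ) := by
      norm_num
    rw [hz]
    ring
  rw [hsum0]
  have hx : (T (-1) * del + T 1 : LaurentPolynomial ℤ) = -T (-3) := by
    have e1 : (T (-1) : LaurentPolynomial ℤ) * T 2 = T 1 := by rw [TT]; norm_num
    have e2 : (T (-1) : LaurentPolynomial ℤ) * T (-2) = T (-3) := by rw [TT]; norm_num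
    calc (T (-1) : LaurentPolynomial ℤ) * del + T 1
        = -(T (-1) * T 2) - (T (-1) * T (-2)) + T 1 := by unfold del; ring
      _ = -(T 1) - T (-3) + T 1 := by rw [e1, e2]
      _ = -T (-3) := by ring
  rw [hx]
  have hpow : ((-T (-3) : LaurentPolynomial ℤ))^d = -T (-3*(d:ℤ)) := by
    rw [Odd.neg_pow hdo, T_pow]
    congr 1
    ring
  rw [hpow]
  have hTd : (T (d:ℤ) : LaurentPolynomial ℤ) * del^2 = T ((d:ℤ)+4) + 2 * T (d:ℤ) + T ((d:ℤ)-4) := by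
    rw [del_sq]
    have e1 : (T (d:ℤ) : LaurentPolynomial ℤ) * T 4 = T ((d:ℤ)+4) := by rw [TT]
    have e2 : (T (d:ℤ) : LaurentPolynomial ℤ) * T (-4) = T ((d:ℤ)-4) := by rw [TT]; congr 1
    calc (T (d:ℤ) : LaurentPolynomial ℤ) * (T 4 + 2 + T (-4))
        = T (d:ℤ) * T 4 + 2 * T (d:ℤ) + T (d:ℤ) * T (-4) := by ring
      _ = T ((d:ℤ)+4) + 2 * T (d:ℤ) + T ((d:ℤ)-4) := by rw [e1, e2]
  calc (-T (-3*(d:ℤ)) - T (d:ℤ)) + T (d:ℤ) * del^2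
      = T (d:ℤ) * del^2 - T (d:ℤ) - T (-3*(d:ℤ)) := by ring
    _ = T ((d:ℤ)+4) + 2 * T (d:ℤ) + T ((d:ℤ)-4) - T (d:ℤ) - T (-3*(d:ℤ)) := by rw [hTd]
    _ = T ((d:ℤ)+4) + T (d:ℤ) + T ((d:ℤ)-4) - T (-3*(d:ℤ)) := by ring

end DelBracket
section Support

noncomputable def hP (d : ℕ) : LaurentPolynomial ℤ :=
  AddMonoidAlgebra.single ((d:ℤ)+2) (-1) +
    ∑ j ∈ Finset.range (d-1), AddMonoidAlgebra.single ((d:ℤ)-6-4*(j:ℤ)) ((-1:ℤ)^(j+1))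

lemma del_T (e : ℤ) : del * T e = -T (e+2) - T (e-2) := by
  calc del * T e = -(T 2 * T e) - T (-2) * T e := by unfold del; ring
    _ = -T (e+2) - T (e-2) := by
        rw [TT, TT, show (2:ℤ)+e = e+2 by ring, show (-2:ℤ)+e = e-2 by ring]

lemma del_hP {d : ℕ} (hd3 : 3 ≤ d) (hdo : Odd d) :
    del * hP d = T ((d:ℤ)+4) + T (d:ℤ) + T ((d:ℤ)-4) - T (-3*(d:ℤ)) := by
  have hd1 : 1 ≤ d := by omega
  unfold hP
  rw [single_eq_C_mul_T]
  have hs : ∀ j ∈ Finset.range (d-1),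
      (AddMonoidAlgebra.single ((d:ℤ)-6-4*(j:ℤ)) ((-1:ℤ)^(j+1)) : LaurentPolynomial ℤ)
        = C ((-1:ℤ)^(j+1)) * T ((d:ℤ)-6-4*(j:ℤ)) :=
    fun j _ => single_eq_C_mul_T _ _
  rw [Finset.sum_congr rfl hs, mul_add, Finset.mul_sum]
  set u : ℕ → LaurentPolynomial ℤ := fun j => C ((-1:ℤ)^j) * T ((d:ℤ)-4-4*(j:ℤ)) with hu
  have hterm : ∀ j ∈ Finset.range (d-1),
      del * (C ((-1:ℤ)^(j+1)) * T ((d:ℤ)-6-4*(j:ℤ))) = u j - u (j+1) := by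
    intro j _
    have hC : (C ((-1:ℤ)^(j+1)) : LaurentPolynomial ℤ) = - C ((-1:ℤ)^j) := by
      rw [pow_succ, map_mul, map_neg, map_one, mul_neg_one]
    rw [hu]
    simp only []
    have e1 : (d:ℤ)-6-4*(j:ℤ)+2 = (d:ℤ)-4-4*(j:ℤ) := by ring
    have e2 : (d:ℤ)-6-4*(j:ℤ)-2 = (d:ℤ)-4-4*((j+1:ℕ):ℤ) := by push_cast; ring
    calc del * (C ((-1:ℤ)^(j+1)) * T ((d:ℤ)-6-4*(j:ℤ)))
        = C ((-1:ℤ)^(j+1)) * (del * T ((d:ℤ)-6-4*(j:ℤ))) := by ring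
      _ = C ((-1:ℤ)^(j+1)) * (-T ((d:ℤ)-4-4*(j:ℤ)) - T ((d:ℤ)-4-4*((j+1:ℕ):ℤ))) := by
          rw [del_T, e1, e2]
      _ = C ((-1:ℤ)^j) * T ((d:ℤ)-4-4*(j:ℤ)) - C ((-1:ℤ)^(j+1)) * T ((d:ℤ)-4-4*((j+1:ℕ):ℤ)) := by
          rw [hC]; ring
  have hsum : ∑ j ∈ Finset.range (d-1),
      del * (C ((-1:ℤ)^(j+1)) * T ((d:ℤ)-6-4*(j:ℤ))) = u 0 - u (d-1) := by
    rw [Finset.sum_congr rfl hterm, Finset.sum_range_sub' u (d-1)]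
  have hmul : ∀ x : LaurentPolynomial ℤ, del * (C ((-1:ℤ)^(0+1)) * x) = del * (C ((-1:ℤ)^(0+1)) * x) := fun _ => rfl
  rw [hsum]
  have hhead : del * (C (-1 : ℤ) * T ((d:ℤ)+2)) = T ((d:ℤ)+4) + T (d:ℤ) := by
    calc del * (C (-1:ℤ) * T ((d:ℤ)+2)) = C (-1:ℤ) * (del * T ((d:ℤ)+2)) := by ring
      _ = C (-1:ℤ) * (-T ((d:ℤ)+2+2) - T ((d:ℤ)+2-2)) := by rw [del_T]
      _ = T ((d:ℤ)+4) + T (d:ℤ) := by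
          rw [show (d:ℤ)+2+2 = (d:ℤ)+4 by ring, show (d:ℤ)+2-2 = (d:ℤ) by ring,
            map_neg, map_one]
          ring
  rw [hhead]
  have hu0 : u 0 = T ((d:ℤ)-4) := by
    rw [hu]
    simp only [pow_zero, map_one, one_mul, Nat.cast_zero]
    norm_num
  have hud : u (d-1) = T (-3*(d:ℤ)) := by
    rw [hu]
    simp only []
    have hev : Even (d-1) := by
      obtain ⟨k, hk⟩ := hdo
      exact ⟨k, by omega⟩
    rw [hev.neg_one_pow, map_one, one_mul]
    congr 1
    have : ((d-1:ℕ):ℤ) = (d:ℤ)-1 := by omega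
    rw [this]
    ring
  rw [hu0, hud]
  ring

lemma del_ne_zero : (del : LaurentPolynomial ℤ) ≠ 0 := by
  intro h
  have h2 : (del : LaurentPolynomial ℤ).coeff 2 = -1 := by
    show ((-T 2 - T (-2) : LaurentPolynomial ℤ)).coeff 2 = -1
    rw [AddMonoidAlgebra.coeff_sub, AddMonoidAlgebra.coeff_neg, Finsupp.sub_apply, Finsupp.neg_apply]
    show -(Finsupp.single (2:ℤ) (1:ℤ)) 2 - (Finsupp.single (-2:ℤ) (1:ℤ)) 2 = -1
    rw [Finsupp.single_apply, Finsupp.single_apply]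
    norm_num
  rw [h] at h2
  simp at h2

lemma bracket_eq_hP {d : ℕ} (hd3 : 3 ≤ d) (hdo : Odd d) :
    bracket d (Cd d) = hP d := by
  apply mul_left_cancel₀ del_ne_zero
  rw [del_mul_bracket hd3 hdo, del_hP hd3 hdo]

lemma hP_apply {d : ℕ} (n : ℤ) :
    (hP d).coeff n = (if (d:ℤ)+2 = n then (-1:ℤ) else 0) +
      ∑ j ∈ Finset.range (d-1), (if (d:ℤ)-6-4*(j:ℤ) = n then (-1:ℤ)^(j+1) else 0) := by
  unfold hP
  rw [AddMonoidAlgebra.coeff_add, Finsupp.add_apply, AddMonoidAlgebra.coeff_sum,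
    Finsupp.finset_sum_apply, AddMonoidAlgebra.coeff_single, Finsupp.single_apply]
  congr 1
  apply Finset.sum_congr rfl
  intro j _
  rw [AddMonoidAlgebra.coeff_single, Finsupp.single_apply]

lemma hP_max_mem {d : ℕ} (hd3 : 3 ≤ d) : ((d:ℤ)+2) ∈ (hP d).coeff.support := by
  rw [Finsupp.mem_support_iff, hP_apply]
  rw [if_pos rfl]
  have hz : ∑ j ∈ Finset.range (d-1), (if (d:ℤ)-6-4*(j:ℤ) = (d:ℤ)+2 then (-1:ℤ)^(j+1) else 0) = 0 := by
    apply Finset.sum_eq_zero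
    intro j _
    rw [if_neg (by omega)]
  rw [hz]
  norm_num

lemma hP_min_mem {d : ℕ} (hd3 : 3 ≤ d) (hdo : Odd d) : (-3*(d:ℤ)+2) ∈ (hP d).coeff.support := by
  rw [Finsupp.mem_support_iff, hP_apply]
  rw [if_neg (by omega)]
  have hz := Finset.sum_eq_single (s := Finset.range (d-1))
    (f := fun j => if (d:ℤ)-6-4*(j:ℤ) = -3*(d:ℤ)+2 then (-1:ℤ)^(j+1) else 0) (d-2)
    (by intro j hj hne
        apply if_neg
        rw [Finset.mem_range] at hj
        intro hc
        apply hne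
        omega)
    (by intro hne
        exact absurd (Finset.mem_range.mpr (by omega)) hne)
  rw [hz]
  show 0 + (if (d:ℤ)-6-4*((d-2:ℕ):ℤ) = -3*(d:ℤ)+2 then (-1:ℤ)^(d-2+1) else 0) ≠ 0
  rw [if_pos (by omega)]
  have hev : Even (d-2+1) := by
    obtain ⟨k, hk⟩ := hdo
    exact ⟨k, by omega⟩
  rw [hev.neg_one_pow]
  norm_num

lemma hP_bounds {d : ℕ} (hd3 : 3 ≤ d) {n : ℤ} (hn : n ∈ (hP d).coeff.support) :
    -3*(d:ℤ)+2 ≤ n ∧ n ≤ (d:ℤ)+2 := by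
  rw [Finsupp.mem_support_iff, hP_apply] at hn
  by_contra hcon
  apply hn
  have h1 : (if (d:ℤ)+2 = n then (-1:ℤ) else 0) = 0 := by
    apply if_neg
    intro h
    apply hcon
    constructor <;> omega
  have h2 : ∑ j ∈ Finset.range (d-1), (if (d:ℤ)-6-4*(j:ℤ) = n then (-1:ℤ)^(j+1) else 0) = 0 := by
    apply Finset.sum_eq_zero
    intro j hj
    rw [Finset.mem_range] at hj
    apply if_neg
    intro h
    apply hcon
    constructor <;> omega
  rw [h1, h2]
  norm_num

lemma hP_max {d : ℕ} (hd3 : 3 ≤ d) : (hP d).coeff.support.max = ((d:ℤ)+2 : ℤ) := by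
  apply le_antisymm
  · apply Finset.max_le
    intro a ha
    exact_mod_cast (hP_bounds hd3 ha).2
  · exact Finset.le_max (hP_max_mem hd3)

lemma hP_min {d : ℕ} (hd3 : 3 ≤ d) (hdo : Odd d) :
    (hP d).coeff.support.min = (-3*(d:ℤ)+2 : ℤ) := by
  apply le_antisymm
  · exact Finset.min_le (hP_min_mem hd3 hdo)
  · apply Finset.le_min
    intro a ha
    exact_mod_cast (hP_bounds hd3 ha).1

end Support

/-- for odd `d ≥ 3` and `C(d) = {(i, i+d) : 1 ≤ i ≤ d}`, the bracket
`⟨C(d)⟩` is nonzero, has maximal exponent `d+2`, minimal exponent `-3d+2`, and span `4d`. -/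
theorem span_bracket_Codd (d : ℕ) (hd3 : 3 ≤ d) (hd : Odd d) :
    bracket d ((Finset.Icc 1 d).image fun i : ℕ => ((i : ℤ), (i : ℤ) + d)) ≠ 0 ∧
    maxDeg (bracket d ((Finset.Icc 1 d).image fun i : ℕ => ((i : ℤ), (i : ℤ) + d)))
      = (d : ℤ) + 2 ∧
    minDeg (bracket d ((Finset.Icc 1 d).image fun i : ℕ => ((i : ℤ), (i : ℤ) + d)))
      = -3 * (d : ℤ) + 2 ∧
    spanL (bracket d ((Finset.Icc 1 d).image fun i : ℕ => ((i : ℤ), (i : ℤ) + d)))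
      = 4 * d := by
  have hCeq : ((Finset.Icc 1 d).image fun i : ℕ => ((i : ℤ), (i : ℤ) + d)) = Cd d := rfl
  have hbr : bracket d (Cd d) = hP d := bracket_eq_hP hd3 hd
  have hne : bracket d (Cd d) ≠ 0 := by
    rw [hbr]
    intro h0
    have hm := hP_max_mem (d := d) hd3
    rw [h0] at hm
    simp at hm
  have hmax : maxDeg (bracket d (Cd d)) = (d:ℤ) + 2 := by
    rw [hbr]
    unfold maxDeg
    rw [hP_max hd3]
    rfl
  have hmin : minDeg (bracket d (Cd d)) = -3 * (d:ℤ) + 2 := by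
    rw [hbr]
    unfold minDeg
    rw [hP_min hd3 hd]
    rfl
  refine ⟨by rw [hCeq]; exact hne, by rw [hCeq]; exact hmax, by rw [hCeq]; exact hmin, ?_⟩
  rw [hCeq]
  unfold spanL
  rw [hmax, hmin]
  ring
end

section
/- Let d ≥ 4 be an even integer and let C(d) := {(1,d), (d+1,2d)} ∪ {(2d−i, i+1) : 1 ≤ i ≤ d−2}. Then ⟨C(d)⟩ ≠ 0 and span ⟨C(d)⟩ = 4d; more precisely, the maximal exponent of ⟨C(d)⟩ is d+4 and the minimal exponent is −3d+4. -/
open Equiv LaurentPolynomial Finset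

namespace SpanBr


variable {C : Finset (ℤ × ℤ)} {s : {c // c ∈ C} → Bool}

/-- orbit membership is reflexive -/
lemma orb_refl (G : Subgroup (Perm ℤ)) (x : ℤ) : x ∈ MulAction.orbit G x :=
  MulAction.mem_orbit_self x

lemma orb_symm {G : Subgroup (Perm ℤ)} {x y : ℤ} (h : y ∈ MulAction.orbit G x) :
    x ∈ MulAction.orbit G y := by
  obtain ⟨g, rfl⟩ := h
  exact ⟨g⁻¹, by simp⟩

lemma orb_trans {G : Subgroup (Perm ℤ)} {x y z : ℤ} (h1 : y ∈ MulAction.orbit G x)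
    (h2 : z ∈ MulAction.orbit G y) : z ∈ MulAction.orbit G x := by
  obtain ⟨g, rfl⟩ := h1; obtain ⟨h, rfl⟩ := h2
  exact ⟨h * g, by simp [mul_smul]⟩

/-- basic step: a swap in the generating set moves p to q within an orbit -/
lemma orb_step {p q : ℤ}
    (h : Equiv.swap p q ∈ ⋃ c : {c // c ∈ C}, Rset (s c) c.1) :
    q ∈ MulAction.orbit (stateGroup C s) p :=
  ⟨⟨Equiv.swap p q, Subgroup.subset_closure h⟩, Equiv.swap_apply_left p q⟩

lemma orb_step' {p q x : ℤ}
    (h : Equiv.swap p q ∈ ⋃ c : {c // c ∈ C}, Rset (s c) c.1)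
    (hx : p ∈ MulAction.orbit (stateGroup C s) x) :
    q ∈ MulAction.orbit (stateGroup C s) x :=
  orb_trans hx (orb_step h)

/-- Upper bound on Gamma via a covering set of orbit representatives. -/
lemma gamma_le (d : ℕ) (S : Finset ℤ)
    (h : ∀ x ∈ Set.Icc (0:ℤ) (2*d), ∃ y ∈ S, x ∈ MulAction.orbit (stateGroup C s) y) :
    Gamma d C s ≤ S.card := by
  have hsub : ((fun x : ℤ => MulAction.orbit (stateGroup C s) x) '' Set.Icc (0 : ℤ) (2 * d))
      ⊆ (fun x : ℤ => MulAction.orbit (stateGroup C s) x) '' (S : Set ℤ) := by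
    rintro _ ⟨x, hx, rfl⟩
    obtain ⟨y, hyS, hxy⟩ := h x hx
    refine ⟨y, hyS, ?_⟩
    ext z
    constructor
    · intro hz; exact orb_trans (orb_symm hxy) hz
    · intro hz; exact orb_trans hxy hz
  calc Gamma d C s ≤ ((fun x : ℤ => MulAction.orbit (stateGroup C s) x) '' (S : Set ℤ)).ncard :=
        Set.ncard_le_ncard hsub (S.finite_toSet.image _)
    _ ≤ (S : Set ℤ).ncard := Set.ncard_image_le S.finite_toSet
    _ = S.card := Set.ncard_coe_finset S

/-- An invariant constant on generators is constant on orbits. -/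
lemma invariant_orbit (P : ℤ → ℤ)
    (hP : ∀ g ∈ ⋃ c : {c // c ∈ C}, Rset (s c) c.1, ∀ x : ℤ, P (g x) = P x)
    {x y : ℤ} (h : y ∈ MulAction.orbit (stateGroup C s) x) : P y = P x := by
  obtain ⟨⟨g, hg⟩, rfl⟩ := h
  have key : ∀ g : Perm ℤ, g ∈ Subgroup.closure (⋃ c : {c // c ∈ C}, Rset (s c) c.1) →
      ∀ x : ℤ, P (g x) = P x := by
    intro g hg
    induction hg using Subgroup.closure_induction with
    | mem g hgmem => exact hP g hgmem
    | one => intro x; rfl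
    | mul a b _ _ ha hb => intro x; simpa [Equiv.Perm.mul_apply] using (ha (b x)).trans (hb x)
    | inv a _ ha =>
        intro x
        have := ha (a⁻¹ x)
        simpa using this.symm
  exact key g hg _

/-- Lower bound on Gamma via an invariant separating representatives. -/
lemma gamma_ge (d : ℕ) (P : ℤ → ℤ) (R : Finset ℤ)
    (hR : (R : Set ℤ) ⊆ Set.Icc (0:ℤ) (2*d))
    (hP : ∀ g ∈ ⋃ c : {c // c ∈ C}, Rset (s c) c.1, ∀ x : ℤ, P (g x) = P x)
    (hinj : Set.InjOn P (R : Set ℤ)) :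
    R.card ≤ Gamma d C s := by
  have hinj2 : Set.InjOn (fun x : ℤ => MulAction.orbit (stateGroup C s) x) (R : Set ℤ) := by
    intro x hx y hy hxy
    have : x ∈ MulAction.orbit (stateGroup C s) y := by
      have := congrFun (congrArg Membership.mem hxy) x
      simp only [eq_iff_iff] at this
      exact (show x ∈ MulAction.orbit (stateGroup C s) x from orb_refl _ x) |> fun h => by
        have hxy' : MulAction.orbit (stateGroup C s) x = MulAction.orbit (stateGroup C s) y := hxy
        rw [← hxy']; exact h
    exact hinj hx hy (invariant_orbit P hP this)
  calc R.card = (R : Set ℤ).ncard := (Set.ncard_coe_finset R).symm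
    _ = ((fun x : ℤ => MulAction.orbit (stateGroup C s) x) '' (R : Set ℤ)).ncard :=
        (Set.ncard_image_of_injOn hinj2).symm
    _ ≤ Gamma d C s := Set.ncard_le_ncard (Set.image_mono hR)
        ((Set.finite_Icc _ _).image _)




/-- coefficient of a Laurent polynomial -/
def cf (f : LaurentPolynomial ℤ) (n : ℤ) : ℤ := f.coeff n

lemma cf_add (f g : LaurentPolynomial ℤ) (n : ℤ) : cf (f + g) n = cf f n + cf g n := rfl
lemma cf_neg (f : LaurentPolynomial ℤ) (n : ℤ) : cf (-f) n = -cf f n := rfl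
lemma cf_sub (f g : LaurentPolynomial ℤ) (n : ℤ) : cf (f - g) n = cf f n - cf g n := by
  rw [sub_eq_add_neg, cf_add, cf_neg]; ring

noncomputable def dlt : LaurentPolynomial ℤ := -T 2 - T (-2)

lemma cf_mul_T (f : LaurentPolynomial ℤ) (e n : ℤ) : cf (f * T e) n = cf f (n - e) := by
  have h := AddMonoidAlgebra.coeff_mul_single_apply f (1:ℤ) e n
  rw [mul_one] at h
  exact h

lemma cf_T_mul (e : ℤ) (f : LaurentPolynomial ℤ) (n : ℤ) : cf (T e * f) n = cf f (n - e) := by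
  have h := AddMonoidAlgebra.coeff_single_mul_apply f (1:ℤ) e n
  rw [one_mul] at h
  rw [show -e + n = n - e by ring] at h
  exact h

lemma mul_dlt_apply (f : LaurentPolynomial ℤ) (n : ℤ) :
    cf (f * dlt) n = -cf f (n - 2) - cf f (n + 2) := by
  have h2 : (f * dlt) = -(f * T 2) - f * T (-2) := by rw [dlt]; ring
  rw [h2, cf_sub, cf_neg, cf_mul_T, cf_mul_T, sub_neg_eq_add]

lemma one_apply_LP (n : ℤ) : cf (1 : LaurentPolynomial ℤ) n = if n = 0 then 1 else 0 := by
  show (Finsupp.single (0:ℤ) (1:ℤ)) n = _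
  rw [Finsupp.single_apply]
  simp [eq_comm]

lemma dlt_pow_apply_eq_zero : ∀ (k : ℕ) (n : ℤ), (n < -(2*k) ∨ (2*k:ℤ) < n) → cf (dlt ^ k) n = 0 := by
  intro k
  induction k with
  | zero => intro n hn; rw [pow_zero, one_apply_LP]; split <;> omega
  | succ k ih =>
      intro n hn
      rw [pow_succ, mul_dlt_apply, ih (n-2) (by push_cast at hn ⊢; omega),
        ih (n+2) (by push_cast at hn ⊢; omega)]
      ring

lemma dlt_pow_apply_top : ∀ (k : ℕ), cf (dlt ^ k) (2*k) = (-1)^k := by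
  intro k
  induction k with
  | zero => simpa using one_apply_LP 0
  | succ k ih =>
      rw [pow_succ, mul_dlt_apply]
      push_cast
      rw [show 2*((k:ℤ)+1) - 2 = 2*k by ring, ih,
        dlt_pow_apply_eq_zero k (2*((k:ℤ)+1)+2) (by push_cast; omega)]
      ring

lemma dlt_pow_apply_bot : ∀ (k : ℕ), cf (dlt ^ k) (-(2*k)) = (-1)^k := by
  intro k
  induction k with
  | zero => simpa using one_apply_LP 0
  | succ k ih =>
      rw [pow_succ, mul_dlt_apply]
      push_cast
      rw [dlt_pow_apply_eq_zero k (-(2*((k:ℤ)+1)) - 2) (by push_cast; omega)]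
      rw [show -(2 * ((k:ℤ) + 1)) + 2 = -(2*(k:ℤ)) by ring, ih]
      ring

lemma term_apply_eq_zero (e : ℤ) (k : ℕ) (n : ℤ) (h : n < e - 2*k ∨ e + 2*k < n) :
    cf (T e * dlt ^ k) n = 0 := by
  rw [cf_T_mul, dlt_pow_apply_eq_zero k _ (by omega)]

lemma term_apply_top (e : ℤ) (k : ℕ) : cf (T e * dlt ^ k) (e + 2*k) = (-1)^k := by
  rw [cf_T_mul, show e + 2*(k:ℤ) - e = 2*k by ring, dlt_pow_apply_top]

lemma term_apply_bot (e : ℤ) (k : ℕ) : cf (T e * dlt ^ k) (e - 2*k) = (-1)^k := by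
  rw [cf_T_mul, show e - 2*(k:ℤ) - e = -(2*(k:ℤ)) by ring]
  exact_mod_cast dlt_pow_apply_bot k




def Cd (d : ℕ) : Finset (ℤ × ℤ) :=
  insert ((1 : ℤ), (d : ℤ))
    (insert ((d : ℤ) + 1, 2 * (d : ℤ))
      ((Finset.Icc 1 (d - 2)).image fun i : ℕ => (2 * (d : ℤ) - i, (i : ℤ) + 1)))

lemma memA (d : ℕ) : ((1:ℤ), (d:ℤ)) ∈ Cd d := mem_insert_self _ _
lemma memB (d : ℕ) : ((d:ℤ)+1, 2*(d:ℤ)) ∈ Cd d := mem_insert_of_mem (mem_insert_self _ _)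
lemma memC (d : ℕ) (i : ℕ) (h1 : 1 ≤ i) (h2 : i ≤ d - 2) :
    (2*(d:ℤ) - i, (i:ℤ)+1) ∈ Cd d :=
  mem_insert_of_mem (mem_insert_of_mem (mem_image.2 ⟨i, mem_Icc.2 ⟨h1, h2⟩, rfl⟩))

lemma Rset_pos_A {c : ℤ × ℤ} (hc : c.1 < c.2) :
    Rset true c = {Equiv.swap c.1 (c.2 - 1), Equiv.swap (c.1 - 1) c.2} := by
  rw [Rset, if_pos]; simp [hc]

lemma Rset_pos_B {c : ℤ × ℤ} (hc : c.1 < c.2) :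
    Rset false c = {Equiv.swap c.1 c.2, Equiv.swap (c.1 - 1) (c.2 - 1)} := by
  rw [Rset, if_neg]; simp [hc]

lemma Rset_neg_A {c : ℤ × ℤ} (hc : c.2 < c.1) :
    Rset true c = {Equiv.swap c.1 c.2, Equiv.swap (c.1 - 1) (c.2 - 1)} := by
  rw [Rset, if_neg]; simp [show ¬ (c.1 < c.2) from not_lt.2 hc.le]

lemma Rset_neg_B {c : ℤ × ℤ} (hc : c.2 < c.1) :
    Rset false c = {Equiv.swap c.1 (c.2 - 1), Equiv.swap (c.1 - 1) c.2} := by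
  rw [Rset, if_pos]; simp [show ¬ (c.1 < c.2) from not_lt.2 hc.le]

def gens (d : ℕ) (s : {c // c ∈ Cd d} → Bool) : Set (Perm ℤ) :=
  ⋃ c : {c // c ∈ Cd d}, Rset (s c) c.1

lemma mem_gens (d : ℕ) {s : {c // c ∈ Cd d} → Bool} {c : ℤ × ℤ} (hc : c ∈ Cd d)
    {g : Perm ℤ} (hg : g ∈ Rset (s ⟨c, hc⟩) c) : g ∈ gens d s :=
  Set.mem_iUnion.2 ⟨⟨c, hc⟩, hg⟩

variable {d : ℕ} {s : {c // c ∈ Cd d} → Bool}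

section edges
variable (hd4 : 4 ≤ d)
include hd4

-- cap a edges
lemma eA1 (ha : s ⟨((1:ℤ),(d:ℤ)), memA d⟩ = true) :
    Equiv.swap (1:ℤ) ((d:ℤ)-1) ∈ gens d s := by
  apply mem_gens d (memA d)
  rw [ha, Rset_pos_A (show (1:ℤ) < (d:ℤ) by omega)]
  exact Set.mem_insert _ _

lemma eA2 (ha : s ⟨((1:ℤ),(d:ℤ)), memA d⟩ = true) :
    Equiv.swap (0:ℤ) (d:ℤ) ∈ gens d s := by
  apply mem_gens d (memA d)
  rw [ha, Rset_pos_A (show (1:ℤ) < (d:ℤ) by omega)]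
  refine Set.mem_insert_of_mem _ ?_
  norm_num

lemma eA1' (ha : s ⟨((1:ℤ),(d:ℤ)), memA d⟩ = false) :
    Equiv.swap (1:ℤ) (d:ℤ) ∈ gens d s := by
  apply mem_gens d (memA d)
  rw [ha, Rset_pos_B (show (1:ℤ) < (d:ℤ) by omega)]
  exact Set.mem_insert _ _

lemma eA2' (ha : s ⟨((1:ℤ),(d:ℤ)), memA d⟩ = false) :
    Equiv.swap (0:ℤ) ((d:ℤ)-1) ∈ gens d s := by
  apply mem_gens d (memA d)
  rw [ha, Rset_pos_B (show (1:ℤ) < (d:ℤ) by omega)]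
  refine Set.mem_insert_of_mem _ ?_
  norm_num

-- cap b edges
lemma eB1 (hb : s ⟨((d:ℤ)+1, 2*(d:ℤ)), memB d⟩ = true) :
    Equiv.swap ((d:ℤ)+1) (2*(d:ℤ)-1) ∈ gens d s := by
  apply mem_gens d (memB d)
  rw [hb, Rset_pos_A (show (d:ℤ)+1 < 2*(d:ℤ) by omega)]
  exact Set.mem_insert _ _

lemma eB2 (hb : s ⟨((d:ℤ)+1, 2*(d:ℤ)), memB d⟩ = true) :
    Equiv.swap (d:ℤ) (2*(d:ℤ)) ∈ gens d s := by
  apply mem_gens d (memB d)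
  rw [hb, Rset_pos_A (show (d:ℤ)+1 < 2*(d:ℤ) by omega)]
  refine Set.mem_insert_of_mem _ ?_
  norm_num

lemma eB1' (hb : s ⟨((d:ℤ)+1, 2*(d:ℤ)), memB d⟩ = false) :
    Equiv.swap ((d:ℤ)+1) (2*(d:ℤ)) ∈ gens d s := by
  apply mem_gens d (memB d)
  rw [hb, Rset_pos_B (show (d:ℤ)+1 < 2*(d:ℤ) by omega)]
  exact Set.mem_insert _ _

lemma eB2' (hb : s ⟨((d:ℤ)+1, 2*(d:ℤ)), memB d⟩ = false) :
    Equiv.swap (d:ℤ) (2*(d:ℤ)-1) ∈ gens d s := by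
  apply mem_gens d (memB d)
  rw [hb, Rset_pos_B (show (d:ℤ)+1 < 2*(d:ℤ) by omega)]
  refine Set.mem_insert_of_mem _ ?_
  norm_num

-- rung edges, i ∈ [1, d-2]
lemma eC1 (i : ℕ) (h1 : 1 ≤ i) (h2 : i ≤ d - 2)
    (hc : s ⟨(2*(d:ℤ)-i, (i:ℤ)+1), memC d i h1 h2⟩ = true) :
    Equiv.swap (2*(d:ℤ)-i) ((i:ℤ)+1) ∈ gens d s := by
  apply mem_gens d (memC d i h1 h2)
  rw [hc, Rset_neg_A (show ((2*(d:ℤ)-i, (i:ℤ)+1) : ℤ × ℤ).2 < (2*(d:ℤ)-i, (i:ℤ)+1).1 by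
    show ((i:ℤ)+1) < 2*(d:ℤ)-i; omega)]
  exact Set.mem_insert _ _

lemma eC2 (i : ℕ) (h1 : 1 ≤ i) (h2 : i ≤ d - 2)
    (hc : s ⟨(2*(d:ℤ)-i, (i:ℤ)+1), memC d i h1 h2⟩ = true) :
    Equiv.swap (2*(d:ℤ)-i-1) (i:ℤ) ∈ gens d s := by
  apply mem_gens d (memC d i h1 h2)
  rw [hc, Rset_neg_A (show ((2*(d:ℤ)-i, (i:ℤ)+1) : ℤ × ℤ).2 < (2*(d:ℤ)-i, (i:ℤ)+1).1 by
    show ((i:ℤ)+1) < 2*(d:ℤ)-i; omega)]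
  refine Set.mem_insert_of_mem _ ?_
  show _ ∈ ({Equiv.swap ((2*(d:ℤ)-i, (i:ℤ)+1).1 - 1) ((2*(d:ℤ)-i, (i:ℤ)+1).2 - 1)} : Set (Perm ℤ))
  rw [Set.mem_singleton_iff]
  norm_num

lemma eC1' (i : ℕ) (h1 : 1 ≤ i) (h2 : i ≤ d - 2)
    (hc : s ⟨(2*(d:ℤ)-i, (i:ℤ)+1), memC d i h1 h2⟩ = false) :
    Equiv.swap (2*(d:ℤ)-i) (i:ℤ) ∈ gens d s := by
  apply mem_gens d (memC d i h1 h2)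
  rw [hc, Rset_neg_B (show ((2*(d:ℤ)-i, (i:ℤ)+1) : ℤ × ℤ).2 < (2*(d:ℤ)-i, (i:ℤ)+1).1 by
    show ((i:ℤ)+1) < 2*(d:ℤ)-i; omega)]
  refine Set.mem_insert_iff.2 (Or.inl ?_)
  show Equiv.swap (2*(d:ℤ)-i) (i:ℤ) = Equiv.swap (2*(d:ℤ)-i) ((i:ℤ)+1-1)
  norm_num

lemma eC2' (i : ℕ) (h1 : 1 ≤ i) (h2 : i ≤ d - 2)
    (hc : s ⟨(2*(d:ℤ)-i, (i:ℤ)+1), memC d i h1 h2⟩ = false) :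
    Equiv.swap (2*(d:ℤ)-i-1) ((i:ℤ)+1) ∈ gens d s := by
  apply mem_gens d (memC d i h1 h2)
  rw [hc, Rset_neg_B (show ((2*(d:ℤ)-i, (i:ℤ)+1) : ℤ × ℤ).2 < (2*(d:ℤ)-i, (i:ℤ)+1).1 by
    show ((i:ℤ)+1) < 2*(d:ℤ)-i; omega)]
  exact Set.mem_insert_of_mem _ rfl

end edges


section cover
variable (d : ℕ) (s : {c // c ∈ Cd d} → Bool)

def Cov (T : Finset ℤ) (x : ℤ) : Prop :=
  ∃ y ∈ T, x ∈ MulAction.orbit (stateGroup (Cd d) s) y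

variable {d s}

lemma cov_mem {T : Finset ℤ} {x : ℤ} (hx : x ∈ T) : Cov d s T x :=
  ⟨x, hx, orb_refl _ x⟩

lemma cov_step {T : Finset ℤ} {p q : ℤ} (hg : Equiv.swap p q ∈ gens d s)
    (hp : Cov d s T p) : Cov d s T q := by
  obtain ⟨y, hy, hyp⟩ := hp
  exact ⟨y, hy, orb_step' hg hyp⟩

lemma cov_step' {T : Finset ℤ} {p q : ℤ} (hg : Equiv.swap p q ∈ gens d s)
    (hq : Cov d s T q) : Cov d s T p := by
  rw [Equiv.swap_comm] at hg
  exact cov_step hg hq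

lemma cov_orb {T : Finset ℤ} {p q : ℤ} (hq : q ∈ MulAction.orbit (stateGroup (Cd d) s) p)
    (hp : Cov d s T p) : Cov d s T q := by
  obtain ⟨y, hy, hyp⟩ := hp
  exact ⟨y, hy, orb_trans hyp hq⟩

/-- The main coverage lemma. -/
lemma coverage (hd4 : 4 ≤ d) (T : Finset ℤ)
    (h0 : (0:ℤ) ∈ T) (h1 : (1:ℤ) ∈ T) (h2 : Cov d s T 2)
    (hrep : ∀ (i : ℕ) (hi1 : 1 ≤ i) (hi2 : i ≤ d - 2),
      s ⟨(2*(d:ℤ)-i, (i:ℤ)+1), memC d i hi1 hi2⟩ = false → Cov d s T ((i:ℤ)+1)) :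
    ∀ x ∈ Set.Icc (0:ℤ) (2*(d:ℤ)), Cov d s T x := by
  have main : ∀ k : ℕ, 1 ≤ k → k ≤ d - 1 → Cov d s T (k:ℤ) ∧ Cov d s T (2*(d:ℤ)-k) := by
    intro k hk
    induction k, hk using Nat.le_induction with
    | base =>
        intro _
        refine ⟨cov_mem h1, ?_⟩
        have hi1 : 1 ≤ 1 := le_refl 1
        have hi2 : 1 ≤ d - 2 := by omega
        cases hl : s ⟨(2*(d:ℤ)-(1:ℕ), ((1:ℕ):ℤ)+1), memC d 1 hi1 hi2⟩ with
        | true =>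
            have hg := eC1 hd4 1 hi1 hi2 hl
            have : Cov d s T (((1:ℕ):ℤ)+1) := by
              have : ((1:ℕ):ℤ)+1 = 2 := by norm_num
              rw [this]; exact h2
            exact cov_step' hg this
        | false =>
            have hg := eC1' hd4 1 hi1 hi2 hl
            refine cov_step' hg ?_
            have : ((1:ℕ):ℤ) = 1 := by norm_num
            rw [this]; exact cov_mem h1
    | succ k hk ih =>
        intro hk2
        have hk1 : 1 ≤ k := hk
        have hkd : k ≤ d - 2 := by omega
        have ihk := ih (by omega)
        cases hl : s ⟨(2*(d:ℤ)-(k:ℕ), ((k:ℕ):ℤ)+1), memC d k hk1 hkd⟩ with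
        | true =>
            have hg1 := eC1 hd4 k hk1 hkd hl
            have hg2 := eC2 hd4 k hk1 hkd hl
            constructor
            · have hcv := cov_step hg1 ihk.2
              have he : (((k+1):ℕ):ℤ) = (k:ℤ)+1 := by push_cast; ring
              rw [he]
              exact hcv
            · have he : 2*(d:ℤ)-(((k+1):ℕ):ℤ) = 2*(d:ℤ)-k-1 := by push_cast; ring
              rw [he]
              exact cov_step' hg2 ihk.1

        | false =>
            have hcov := hrep k hk1 hkd hl
            constructor
            · have he : (((k+1):ℕ):ℤ) = (k:ℤ)+1 := by push_cast; ring
              rw [he]; exact hcov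
            · have hg2 := eC2' hd4 k hk1 hkd hl
              have he : 2*(d:ℤ)-(((k+1):ℕ):ℤ) = 2*(d:ℤ)-k-1 := by push_cast; ring
              rw [he]
              exact cov_step' hg2 hcov
  -- cover d
  have covd : Cov d s T (d:ℤ) := by
    cases ha : s ⟨((1:ℤ),(d:ℤ)), memA d⟩ with
    | true => exact cov_step (eA2 hd4 ha) (cov_mem h0)
    | false => exact cov_step (eA1' hd4 ha) (cov_mem h1)
  -- cover 2d
  have cov2d : Cov d s T (2*(d:ℤ)) := by
    cases hb : s ⟨((d:ℤ)+1, 2*(d:ℤ)), memB d⟩ with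
    | true => exact cov_step (eB2 hd4 hb) covd
    | false =>
        have hm := (main (d-1) (by omega) (le_refl _)).2
        have he : 2*(d:ℤ)-((d-1:ℕ):ℤ) = (d:ℤ)+1 := by
          have : ((d-1:ℕ):ℤ) = (d:ℤ)-1 := by omega
          rw [this]; ring
        rw [he] at hm
        exact cov_step (eB1' hd4 hb) hm
  intro x hx
  obtain ⟨hx0, hx2d⟩ := hx
  by_cases hxd : x ≤ (d:ℤ)
  · -- x = 0, x = d, or x ∈ [1, d-1]
    rcases eq_or_lt_of_le hx0 with h | h
    · rw [← h]; exact cov_mem h0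
    · rcases eq_or_lt_of_le hxd with h' | h'
      · rw [h']; exact covd
      · have : ∃ k : ℕ, x = (k:ℤ) ∧ 1 ≤ k ∧ k ≤ d - 1 := by
          refine ⟨x.toNat, ?_, ?_, ?_⟩ <;> omega
        obtain ⟨k, rfl, hk1, hk2⟩ := this
        exact (main k hk1 hk2).1
  · rcases eq_or_lt_of_le hx2d with h | h
    · rw [h]
      exact_mod_cast cov2d
    · have : ∃ k : ℕ, x = 2*(d:ℤ) - k ∧ 1 ≤ k ∧ k ≤ d - 1 := by
        refine ⟨(2*(d:ℤ) - x).toNat, ?_, ?_, ?_⟩ <;> push_cast at h ⊢ <;> omega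
      obtain ⟨k, rfl, hk1, hk2⟩ := this
      exact (main k hk1 hk2).2

end cover

section chain
variable {d : ℕ} {s : {c // c ∈ Cd d} → Bool}

/-- If some rung is labeled B, then the gap `2d-1` is in the orbit of the gap `1`. -/
lemma chain_lemma (hd4 : 4 ≤ d)
    (hB : ∃ (i : ℕ) (hi1 : 1 ≤ i) (hi2 : i ≤ d - 2),
      s ⟨(2*(d:ℤ)-i, (i:ℤ)+1), memC d i hi1 hi2⟩ = false) :
    (2*(d:ℤ)-1) ∈ MulAction.orbit (stateGroup (Cd d) s) 1 := by
  classical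
  -- take the minimal B-labeled rung
  let Q : ℕ → Prop := fun i => ∃ (hi1 : 1 ≤ i) (hi2 : i ≤ d - 2),
      s ⟨(2*(d:ℤ)-i, (i:ℤ)+1), memC d i hi1 hi2⟩ = false
  have hQ : ∃ i, Q i := by
    obtain ⟨i, hi1, hi2, h⟩ := hB; exact ⟨i, hi1, hi2, h⟩
  let i0 := Nat.find hQ
  obtain ⟨hi01, hi02, hlb⟩ : Q i0 := Nat.find_spec hQ
  have hmin : ∀ j, 1 ≤ j → j ≤ d - 2 → j < i0 →
      ∀ (hj1 : 1 ≤ j) (hj2 : j ≤ d - 2),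
        s ⟨(2*(d:ℤ)-j, (j:ℤ)+1), memC d j hj1 hj2⟩ = true := by
    intro j h1 h2 hlt hj1 hj2
    have := Nat.find_min hQ hlt
    simp only [Q, not_exists] at this
    cases hval : s ⟨(2*(d:ℤ)-j, (j:ℤ)+1), memC d j hj1 hj2⟩ with
    | true => rfl
    | false => exact absurd hval (this hj1 hj2)
  set G := stateGroup (Cd d) s with hG
  -- the alternating chain below the minimal B rung
  have M : ∀ k : ℕ, 1 ≤ k → k ≤ i0 →
      (((k:ℤ) ∈ MulAction.orbit G 1 ∧ (2*(d:ℤ)-k) ∈ MulAction.orbit G (2*(d:ℤ)-1)) ∨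
       ((k:ℤ) ∈ MulAction.orbit G (2*(d:ℤ)-1) ∧ (2*(d:ℤ)-k) ∈ MulAction.orbit G 1)) := by
    intro k hk
    induction k, hk using Nat.le_induction with
    | base =>
        intro _
        left
        exact ⟨by exact_mod_cast orb_refl G 1, orb_refl G _⟩
    | succ k hk1 ih =>
        intro hk2
        have hkd : k ≤ d - 2 := by omega
        have hki : k < i0 := by omega
        have hlbl := hmin k hk1 hkd hki hk1 hkd
        have hg1 := eC1 hd4 k hk1 hkd hlbl  -- swap (2d-k) (k+1)
        have hg2 := eC2 hd4 k hk1 hkd hlbl  -- swap (2d-k-1) k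
        have hcast1 : (((k+1):ℕ):ℤ) = (k:ℤ)+1 := by push_cast; ring
        have hcast2 : 2*(d:ℤ)-(((k+1):ℕ):ℤ) = 2*(d:ℤ)-k-1 := by push_cast; ring
        rw [Equiv.swap_comm] at hg2
        rcases ih (by omega) with ⟨hu, hv⟩ | ⟨hu, hv⟩
        · right
          constructor
          · rw [hcast1]
            exact orb_step' hg1 hv
          · rw [hcast2]
            exact orb_step' hg2 hu
        · left
          constructor
          · rw [hcast1]
            exact orb_step' hg1 hv
          · rw [hcast2]
            exact orb_step' hg2 hu
  -- at the minimal B rung, the two chains merge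
  have hg := eC1' hd4 i0 hi01 hi02 hlb  -- swap (2d-i0) i0
  have hmerge : (i0:ℤ) ∈ MulAction.orbit G (2*(d:ℤ)-i0) := orb_step hg
  rcases M i0 hi01 (le_refl _) with ⟨hu, hv⟩ | ⟨hu, hv⟩
  · -- i0 ∈ orb 1, 2d-i0 ∈ orb v1 : then v1 ∈ orb (2d-i0) ∈ orb i0 ∈ orb 1
    have h1 : (2*(d:ℤ)-1) ∈ MulAction.orbit G (2*(d:ℤ)-i0) := orb_symm hv
    have h2 : (2*(d:ℤ)-i0) ∈ MulAction.orbit G 1 := orb_trans hu (orb_symm hmerge)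
    exact orb_trans h2 h1
  · -- i0 ∈ orb v1, 2d-i0 ∈ orb 1
    have h1 : (2*(d:ℤ)-1) ∈ MulAction.orbit G (i0:ℤ) := orb_symm hu
    have h2 : (i0:ℤ) ∈ MulAction.orbit G 1 := orb_trans hv hmerge
    exact orb_trans h2 h1

end chain

section gammabounds
variable {d : ℕ} {s : {c // c ∈ Cd d} → Bool}

lemma swap_inv_apply (P : ℤ → ℤ) {p q : ℤ} (hpq : P p = P q) (x : ℤ) :
    P (Equiv.swap p q x) = P x := by
  rcases eq_or_ne x p with rfl | hxp
  · rw [Equiv.swap_apply_left]; exact hpq.symm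
  rcases eq_or_ne x q with rfl | hxq
  · rw [Equiv.swap_apply_right]; exact hpq
  · rw [Equiv.swap_apply_of_ne_of_ne hxp hxq]

lemma gens_elim {g : Perm ℤ} (hg : g ∈ gens d s) :
    g ∈ Rset (s ⟨((1:ℤ),(d:ℤ)), memA d⟩) ((1:ℤ),(d:ℤ)) ∨
    g ∈ Rset (s ⟨((d:ℤ)+1,2*(d:ℤ)), memB d⟩) ((d:ℤ)+1,2*(d:ℤ)) ∨
    ∃ (i : ℕ) (h1 : 1 ≤ i) (h2 : i ≤ d-2),
      g ∈ Rset (s ⟨(2*(d:ℤ)-i,(i:ℤ)+1), memC d i h1 h2⟩) (2*(d:ℤ)-i,(i:ℤ)+1) := by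
  obtain ⟨c, hgc⟩ := Set.mem_iUnion.1 hg
  obtain ⟨cv, hcv⟩ := c
  rcases Finset.mem_insert.1 hcv with h | h
  · left; subst h; exact hgc
  rcases Finset.mem_insert.1 h with h' | h'
  · right; left; subst h'; exact hgc
  · obtain ⟨i, hi, heq⟩ := Finset.mem_image.1 h'
    obtain ⟨hi1, hi2⟩ := Finset.mem_Icc.1 hi
    right; right
    refine ⟨i, hi1, hi2, ?_⟩
    subst heq
    exact hgc

/-- the invariant separating the three orbits of the all-A state -/
def PA (d : ℕ) : ℤ → ℤ := fun x =>
  if x = 0 ∨ x = (d:ℤ) ∨ x = 2*(d:ℤ) then 0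
  else if x < (d:ℤ) then 1 + x % 2 else 1 + (x+1) % 2

/-- the invariant separating the d-1 orbits of the all-B state -/
def PB (d : ℕ) : ℤ → ℤ := fun x =>
  if x = 0 ∨ x = (d:ℤ)-1 ∨ x = (d:ℤ)+1 ∨ x = 2*(d:ℤ) then 0
  else if x = 1 ∨ x = (d:ℤ) ∨ x = 2*(d:ℤ)-1 then 1
  else min x (2*(d:ℤ)-x)

lemma PA_inv (hd4 : 4 ≤ d) (hd : Even d) (hall : ∀ c, s c = true) :
    ∀ g ∈ gens d s, ∀ x : ℤ, PA d (g x) = PA d x := by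
  obtain ⟨m, hm⟩ := hd
  intro g hg
  rcases gens_elim hg with h | h | ⟨i, h1, h2, h⟩
  · rw [hall, Rset_pos_A (show ((1:ℤ),(d:ℤ)).1 < ((1:ℤ),(d:ℤ)).2 by show (1:ℤ) < d; omega)] at h
    rcases h with h | h <;> rw [h] <;> intro x <;>
      refine swap_inv_apply _ ?_ x <;> simp only [PA, min_def] <;> split_ifs <;> (try push_neg at *) <;> (try simp only [not_true] at *) <;> (try casesm* _ ∨ _, _ ∧ _, False) <;> omega
  · rw [hall, Rset_pos_A (show ((d:ℤ)+1,2*(d:ℤ)).1 < ((d:ℤ)+1,2*(d:ℤ)).2 by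
      show (d:ℤ)+1 < 2*d; omega)] at h
    rcases h with h | h <;> rw [h] <;> intro x <;>
      refine swap_inv_apply _ ?_ x <;> simp only [PA, min_def] <;> split_ifs <;> (try push_neg at *) <;> (try simp only [not_true] at *) <;> (try casesm* _ ∨ _, _ ∧ _, False) <;> omega
  · rw [hall, Rset_neg_A (show ((2*(d:ℤ)-i,(i:ℤ)+1) : ℤ×ℤ).2 < (2*(d:ℤ)-i,(i:ℤ)+1).1 by
      show (i:ℤ)+1 < 2*(d:ℤ)-i; omega)] at h
    rcases h with h | h <;> rw [h] <;> intro x <;>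
      refine swap_inv_apply _ ?_ x <;> simp only [PA, min_def] <;> split_ifs <;> (try push_neg at *) <;> (try simp only [not_true] at *) <;> (try casesm* _ ∨ _, _ ∧ _, False) <;> omega

lemma PB_inv (hd4 : 4 ≤ d) (hall : ∀ c, s c = false) :
    ∀ g ∈ gens d s, ∀ x : ℤ, PB d (g x) = PB d x := by
  intro g hg
  rcases gens_elim hg with h | h | ⟨i, h1, h2, h⟩
  · rw [hall, Rset_pos_B (show ((1:ℤ),(d:ℤ)).1 < ((1:ℤ),(d:ℤ)).2 by show (1:ℤ) < d; omega)] at h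
    rcases h with h | h <;> rw [h] <;> intro x <;>
      refine swap_inv_apply _ ?_ x <;> simp only [PB, min_def] <;> split_ifs <;> (try push_neg at *) <;> (try simp only [not_true] at *) <;> (try casesm* _ ∨ _, _ ∧ _, False) <;> omega
  · rw [hall, Rset_pos_B (show ((d:ℤ)+1,2*(d:ℤ)).1 < ((d:ℤ)+1,2*(d:ℤ)).2 by
      show (d:ℤ)+1 < 2*d; omega)] at h
    rcases h with h | h <;> rw [h] <;> intro x <;>
      refine swap_inv_apply _ ?_ x <;> simp only [PB, min_def] <;> split_ifs <;> (try push_neg at *) <;> (try simp only [not_true] at *) <;> (try casesm* _ ∨ _, _ ∧ _, False) <;> omega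
  · rw [hall, Rset_neg_B (show ((2*(d:ℤ)-i,(i:ℤ)+1) : ℤ×ℤ).2 < (2*(d:ℤ)-i,(i:ℤ)+1).1 by
      show (i:ℤ)+1 < 2*(d:ℤ)-i; omega)] at h
    rcases h with h | h <;> rw [h] <;> intro x <;>
      refine swap_inv_apply _ ?_ x <;> simp only [PB, min_def] <;> split_ifs <;> (try push_neg at *) <;> (try simp only [not_true] at *) <;> (try casesm* _ ∨ _, _ ∧ _, False) <;> omega

end gammabounds

section gammavals
variable {d : ℕ} {s : {c // c ∈ Cd d} → Bool}

lemma card_T3 : ({0,1,2} : Finset ℤ).card = 3 := by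
  rw [card_insert_of_notMem (by norm_num), card_insert_of_notMem (by norm_num), card_singleton]

lemma gammaA_le (hd4 : 4 ≤ d) (hall : ∀ c, s c = true) : Gamma d (Cd d) s ≤ 3 := by
  have hcov := coverage (s := s) hd4 ({0,1,2} : Finset ℤ) (by norm_num) (by norm_num)
    (cov_mem (by norm_num))
    (by intro i h1 h2 hlbl; rw [hall] at hlbl; exact absurd hlbl (by simp))
  have h := gamma_le d ({0,1,2} : Finset ℤ) (fun x hx => hcov x hx)
  rwa [card_T3] at h

lemma gammaA_ge (hd4 : 4 ≤ d) (hd : Even d) (hall : ∀ c, s c = true) :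
    3 ≤ Gamma d (Cd d) s := by
  have v0 : PA d 0 = 0 := by
    simp only [PA, min_def] <;> split_ifs <;> (try push_neg at *) <;>
      (try simp only [not_true] at *) <;> (try casesm* _ ∨ _, _ ∧ _, False) <;> omega
  have v1 : PA d 1 = 2 := by
    simp only [PA, min_def] <;> split_ifs <;> (try push_neg at *) <;>
      (try simp only [not_true] at *) <;> (try casesm* _ ∨ _, _ ∧ _, False) <;> omega
  have v2 : PA d 2 = 1 := by
    simp only [PA, min_def] <;> split_ifs <;> (try push_neg at *) <;>
      (try simp only [not_true] at *) <;> (try casesm* _ ∨ _, _ ∧ _, False) <;> omega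
  have h := gamma_ge d (PA d) ({0,1,2} : Finset ℤ)
    (by intro x hx
        simp only [coe_insert, Set.mem_insert_iff, coe_singleton, Set.mem_singleton_iff] at hx
        rw [Set.mem_Icc]
        rcases hx with rfl | rfl | rfl <;> constructor <;> omega)
    (PA_inv hd4 hd hall)
    (by intro a ha b hb hab
        simp only [coe_insert, Set.mem_insert_iff, coe_singleton, Set.mem_singleton_iff] at ha hb
        rcases ha with rfl | rfl | rfl <;> rcases hb with rfl | rfl | rfl <;>
          simp only [v0, v1, v2] at hab <;> omega)
  rwa [card_T3] at h

lemma PB_val (hd4 : 4 ≤ d) {x : ℤ} (hx0 : 0 ≤ x) (hx2 : x ≤ (d:ℤ)-2) : PB d x = x := by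
  simp only [PB, min_def] <;> split_ifs <;> (try push_neg at *) <;>
    (try simp only [not_true] at *) <;> (try casesm* _ ∨ _, _ ∧ _, False) <;> omega

lemma card_TI (hd4 : 4 ≤ d) : (Finset.Icc (0:ℤ) ((d:ℤ)-2)).card = d - 1 := by
  rw [Int.card_Icc]; omega

lemma gammaB_ge (hd4 : 4 ≤ d) (hall : ∀ c, s c = false) :
    d - 1 ≤ Gamma d (Cd d) s := by
  have h := gamma_ge d (PB d) (Finset.Icc (0:ℤ) ((d:ℤ)-2))
    (by intro x hx
        rw [Finset.mem_coe, Finset.mem_Icc] at hx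
        rw [Set.mem_Icc]; omega)
    (PB_inv hd4 hall)
    (by intro a ha b hb hab
        rw [Finset.mem_coe, Finset.mem_Icc] at ha hb
        rwa [PB_val hd4 ha.1 ha.2, PB_val hd4 hb.1 hb.2] at hab)
  rwa [card_TI hd4] at h

/-- (G3): for every state, Γ ≤ d - 1. -/
lemma gamma_le_dm1 (hd4 : 4 ≤ d) : Gamma d (Cd d) s ≤ d - 1 := by
  have h0 : (0:ℤ) ∈ Finset.Icc (0:ℤ) ((d:ℤ)-2) := by rw [mem_Icc]; omega
  have h1 : (1:ℤ) ∈ Finset.Icc (0:ℤ) ((d:ℤ)-2) := by rw [mem_Icc]; omega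
  have hcov := coverage (s := s) hd4 (Finset.Icc (0:ℤ) ((d:ℤ)-2)) h0 h1
    (cov_mem (by rw [mem_Icc]; omega))
    (by intro i hi1 hi2 hlbl
        by_cases hi : i ≤ d - 3
        · exact cov_mem (by rw [mem_Icc]; omega)
        · have hieq : i = d - 2 := by omega
          have he : (i:ℤ)+1 = (d:ℤ)-1 := by omega
          rw [he]
          cases hlab : s ⟨((1:ℤ),(d:ℤ)), memA d⟩ with
          | true => exact cov_step (eA1 hd4 hlab) (cov_mem h1)
          | false => exact cov_step (eA2' hd4 hlab) (cov_mem h0))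
  have h := gamma_le d (Finset.Icc (0:ℤ) ((d:ℤ)-2)) (fun x hx => hcov x hx)
  rwa [card_TI hd4] at h

lemma gammaB_le (hd4 : 4 ≤ d) : Gamma d (Cd d) s ≤ d - 1 := gamma_le_dm1 hd4

end gammavals

section gammanb
variable {d : ℕ} {s : {c // c ∈ Cd d} → Bool}

/-- representatives coming from B-labeled rungs -/
noncomputable def reps (d : ℕ) (s : {c // c ∈ Cd d} → Bool) : Finset ℤ :=
  (Finset.univ.filter fun c : {c // c ∈ Cd d} => s c = false ∧ c.1.2 < c.1.1).image
    (fun c => c.1.2)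

lemma mem_reps (hd4 : 4 ≤ d) (i : ℕ) (h1 : 1 ≤ i) (h2 : i ≤ d - 2)
    (hlbl : s ⟨(2*(d:ℤ)-i, (i:ℤ)+1), memC d i h1 h2⟩ = false) :
    ((i:ℤ)+1) ∈ reps d s := by
  refine Finset.mem_image.2 ⟨⟨(2*(d:ℤ)-i, (i:ℤ)+1), memC d i h1 h2⟩,
    Finset.mem_filter.2 ⟨Finset.mem_univ _, hlbl, ?_⟩, rfl⟩
  show (i:ℤ)+1 < 2*(d:ℤ)-i
  omega

lemma card_reps_le (hd4 : 4 ≤ d) :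
    (reps d s).card ≤
      (Finset.univ.filter fun c : {c // c ∈ Cd d} => s c = false ∧ c.1.2 < c.1.1).card :=
  Finset.card_image_le

lemma filter_z_subset :
    (Finset.univ.filter fun c : {c // c ∈ Cd d} => s c = false ∧ c.1.2 < c.1.1) ⊆
      (Finset.univ.filter fun c : {c // c ∈ Cd d} => s c = false) := by
  intro c hc
  rw [Finset.mem_filter] at hc ⊢
  exact ⟨hc.1, hc.2.1⟩

/-- (G4): for a state with at least one B label, Γ ≤ nb + 2 -/
lemma gamma_le_nb (hd4 : 4 ≤ d) (hex : ∃ c, s c = false) :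
    Gamma d (Cd d) s ≤ (Finset.univ.filter fun c : {c // c ∈ Cd d} => s c = false).card + 2 := by
  set nbf := (Finset.univ.filter fun c : {c // c ∈ Cd d} => s c = false) with hnbf
  by_cases hab : s ⟨((1:ℤ),(d:ℤ)), memA d⟩ = true ∧ s ⟨((d:ℤ)+1, 2*(d:ℤ)), memB d⟩ = true
  · -- both caps A: use T = {0,1} ∪ reps and the chain lemma
    -- first, some rung is labeled B
    have hBrung : ∃ (i : ℕ) (hi1 : 1 ≤ i) (hi2 : i ≤ d - 2),
        s ⟨(2*(d:ℤ)-i, (i:ℤ)+1), memC d i hi1 hi2⟩ = false := by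
      obtain ⟨c, hc⟩ := hex
      obtain ⟨cv, hcv⟩ := c
      rcases Finset.mem_insert.1 hcv with h | h
      · subst h
        have : s ⟨((1:ℤ),(d:ℤ)), memA d⟩ = false := hc
        rw [hab.1] at this; exact absurd this (by simp)
      rcases Finset.mem_insert.1 h with h' | h'
      · subst h'
        have : s ⟨((d:ℤ)+1, 2*(d:ℤ)), memB d⟩ = false := hc
        rw [hab.2] at this; exact absurd this (by simp)
      · obtain ⟨i, hi, heq⟩ := Finset.mem_image.1 h'
        obtain ⟨hi1, hi2⟩ := Finset.mem_Icc.1 hi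
        subst heq
        exact ⟨i, hi1, hi2, hc⟩
    set T : Finset ℤ := insert 0 (insert 1 (reps d s)) with hT
    have h0 : (0:ℤ) ∈ T := Finset.mem_insert_self _ _
    have h1 : (1:ℤ) ∈ T := Finset.mem_insert_of_mem (Finset.mem_insert_self _ _)
    have hrepT : ∀ (i : ℕ) (hi1 : 1 ≤ i) (hi2 : i ≤ d - 2),
        s ⟨(2*(d:ℤ)-i, (i:ℤ)+1), memC d i hi1 hi2⟩ = false → Cov d s T ((i:ℤ)+1) := by
      intro i hi1 hi2 hlbl
      exact cov_mem (Finset.mem_insert_of_mem (Finset.mem_insert_of_mem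
        (mem_reps hd4 i hi1 hi2 hlbl)))
    have h2 : Cov d s T 2 := by
      have h12 : (1:ℕ) ≤ 1 := le_refl 1
      have h1d : (1:ℕ) ≤ d - 2 := by omega
      cases h1lbl : s ⟨(2*(d:ℤ)-(1:ℕ), ((1:ℕ):ℤ)+1), memC d 1 h12 h1d⟩ with
      | false =>
          have := hrepT 1 h12 h1d h1lbl
          have he : ((1:ℕ):ℤ)+1 = 2 := by norm_num
          rwa [he] at this
      | true =>
          have hv1 := chain_lemma hd4 hBrung
          have hg := eC1 hd4 1 h12 h1d h1lbl
          have hg' : Equiv.swap (2*(d:ℤ)-1) 2 ∈ gens d s := by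
            have e1 : ((1:ℕ):ℤ) = 1 := by norm_num
            rw [e1] at hg
            have e2 : (1:ℤ)+1 = 2 := by norm_num
            rwa [e2] at hg
          exact cov_step hg' (cov_orb hv1 (cov_mem h1))
    have hcov := coverage hd4 T h0 h1 h2 hrepT
    have hle := gamma_le d T (fun x hx => hcov x hx)
    have hcT : T.card ≤ (reps d s).card + 2 := by
      rw [hT]
      calc (insert 0 (insert 1 (reps d s))).card ≤ (insert 1 (reps d s)).card + 1 :=
            Finset.card_insert_le _ _
        _ ≤ (reps d s).card + 1 + 1 := by
            have := Finset.card_insert_le (1:ℤ) (reps d s)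
            omega
        _ = (reps d s).card + 2 := by omega
    have hzle : (reps d s).card ≤ nbf.card :=
      le_trans (card_reps_le hd4) (Finset.card_le_card filter_z_subset)
    omega
  · -- some cap is B: use T = {0,1,2} ∪ reps; then |reps| < nb
    set T : Finset ℤ := insert 0 (insert 1 (insert 2 (reps d s))) with hT
    have h0 : (0:ℤ) ∈ T := Finset.mem_insert_self _ _
    have h1 : (1:ℤ) ∈ T := Finset.mem_insert_of_mem (Finset.mem_insert_self _ _)
    have h2m : (2:ℤ) ∈ T :=
      Finset.mem_insert_of_mem (Finset.mem_insert_of_mem (Finset.mem_insert_self _ _))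
    have hrepT : ∀ (i : ℕ) (hi1 : 1 ≤ i) (hi2 : i ≤ d - 2),
        s ⟨(2*(d:ℤ)-i, (i:ℤ)+1), memC d i hi1 hi2⟩ = false → Cov d s T ((i:ℤ)+1) := by
      intro i hi1 hi2 hlbl
      exact cov_mem (Finset.mem_insert_of_mem (Finset.mem_insert_of_mem
        (Finset.mem_insert_of_mem (mem_reps hd4 i hi1 hi2 hlbl))))
    have hcov := coverage hd4 T h0 h1 (cov_mem h2m) hrepT
    have hle := gamma_le d T (fun x hx => hcov x hx)
    have hcT : T.card ≤ (reps d s).card + 3 := by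
      rw [hT]
      have c1 := Finset.card_insert_le (0:ℤ) (insert 1 (insert 2 (reps d s)))
      have c2 := Finset.card_insert_le (1:ℤ) (insert 2 (reps d s))
      have c3 := Finset.card_insert_le (2:ℤ) (reps d s)
      omega
    -- strict inequality: the B-labeled cap is in nbf but not in the rung filter
    have hzlt : (Finset.univ.filter fun c : {c // c ∈ Cd d} =>
        s c = false ∧ c.1.2 < c.1.1).card < nbf.card := by
      rw [Decidable.not_and_iff_or_not] at hab
      have hwit : ∃ w : {c // c ∈ Cd d}, s w = false ∧ ¬ (w.1.2 < w.1.1) := by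
        rcases hab with h | h
        · refine ⟨⟨((1:ℤ),(d:ℤ)), memA d⟩, ?_, ?_⟩
          · cases hv : s ⟨((1:ℤ),(d:ℤ)), memA d⟩ with
            | true => exact absurd hv h
            | false => rfl
          · show ¬ ((d:ℤ) < 1); omega
        · refine ⟨⟨((d:ℤ)+1, 2*(d:ℤ)), memB d⟩, ?_, ?_⟩
          · cases hv : s ⟨((d:ℤ)+1, 2*(d:ℤ)), memB d⟩ with
            | true => exact absurd hv h
            | false => rfl
          · show ¬ (2*(d:ℤ) < (d:ℤ)+1); omega
      obtain ⟨w, hw1, hw2⟩ := hwit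
      apply Finset.card_lt_card
      rw [Finset.ssubset_iff_of_subset filter_z_subset]
      refine ⟨w, Finset.mem_filter.2 ⟨Finset.mem_univ _, hw1⟩, ?_⟩
      rw [Finset.mem_filter]
      push_neg
      intro _ _
      exact not_lt.1 hw2
    have hzle := card_reps_le (s := s) hd4
    omega

end gammanb

section counting
variable {d : ℕ}

lemma card_img (hd4 : 4 ≤ d) :
    ((Finset.Icc 1 (d-2)).image fun i : ℕ => (2*(d:ℤ)-i, (i:ℤ)+1)).card = d - 2 := by
  rw [Finset.card_image_of_injOn, Nat.card_Icc]
  · omega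
  · intro i _ j _ hij
    have h2 := congrArg Prod.snd hij
    simp only at h2
    omega

lemma card_Cd (hd4 : 4 ≤ d) : (Cd d).card = d := by
  have hBnot : ((d:ℤ)+1, 2*(d:ℤ)) ∉
      (Finset.Icc 1 (d-2)).image (fun i : ℕ => (2*(d:ℤ)-i, (i:ℤ)+1)) := by
    intro h
    obtain ⟨i, hi, heq⟩ := Finset.mem_image.1 h
    rw [Finset.mem_Icc] at hi
    have h2 := congrArg Prod.snd heq
    simp only at h2
    omega
  have hAnot : ((1:ℤ), (d:ℤ)) ∉ insert ((d:ℤ)+1, 2*(d:ℤ))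
      ((Finset.Icc 1 (d-2)).image (fun i : ℕ => (2*(d:ℤ)-i, (i:ℤ)+1))) := by
    intro h
    rcases Finset.mem_insert.1 h with h | h
    · have h1 := congrArg Prod.fst h
      simp only at h1
      omega
    · obtain ⟨i, hi, heq⟩ := Finset.mem_image.1 h
      rw [Finset.mem_Icc] at hi
      have h1 := congrArg Prod.fst heq
      simp only at h1
      omega
  rw [Cd, Finset.card_insert_of_notMem hAnot, Finset.card_insert_of_notMem hBnot,
    card_img hd4]
  omega

lemma card_subtype (hd4 : 4 ≤ d) : Fintype.card {c // c ∈ Cd d} = d := by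
  rw [Fintype.card_coe]
  exact card_Cd hd4

lemma nbcard (hd4 : 4 ≤ d) (s : {c // c ∈ Cd d} → Bool) :
    (Finset.univ.filter fun c : {c // c ∈ Cd d} => s c = true).card +
      (Finset.univ.filter fun c : {c // c ∈ Cd d} => s c = false).card = d := by
  classical
  have h := Finset.card_filter_add_card_filter_not
    (s := (Finset.univ : Finset {c // c ∈ Cd d})) (p := fun c => s c = true)
  have h2 : (Finset.univ.filter fun c : {c // c ∈ Cd d} => ¬ (s c = true)) =
      (Finset.univ.filter fun c : {c // c ∈ Cd d} => s c = false) := by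
    apply Finset.filter_congr
    intro c _
    simp
  rw [h2] at h
  rw [h, Finset.card_univ]
  exact card_subtype hd4

lemma gamma_le_nb3 (hd4 : 4 ≤ d) (s : {c // c ∈ Cd d} → Bool) :
    Gamma d (Cd d) s ≤ (Finset.univ.filter fun c : {c // c ∈ Cd d} => s c = false).card + 3 := by
  by_cases hex : ∃ c, s c = false
  · have := gamma_le_nb hd4 hex
    omega
  · push_neg at hex
    have hall : ∀ c, s c = true := by
      intro c
      cases hv : s c with
      | true => rfl
      | false => exact absurd hv (hex c)
    have := gammaA_le hd4 hall
    omega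

end counting

section bracketcoeffs
variable {d : ℕ}

lemma cf_sum {ι : Type*} (F : Finset ι) (f : ι → LaurentPolynomial ℤ) (n : ℤ) :
    cf (∑ i ∈ F, f i) n = ∑ i ∈ F, cf (f i) n := by
  classical
  induction F using Finset.cons_induction with
  | empty => simp; rfl
  | cons a F ha ih => rw [Finset.sum_cons, Finset.sum_cons, cf_add, ih]

lemma bracketTerm_eq (C : Finset (ℤ × ℤ)) (s : {c // c ∈ C} → Bool) :
    bracketTerm d C s =
      T (((Finset.univ.filter fun c => s c = true).card : ℤ) -
          ((Finset.univ.filter fun c => s c = false).card : ℤ)) *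
        dlt ^ (Gamma d C s - 1) := rfl

lemma cf_bracket (C : Finset (ℤ × ℤ)) (n : ℤ) :
    cf (bracket d C) n = ∑ s : ({c // c ∈ C} → Bool), cf (bracketTerm d C s) n :=
  cf_sum _ _ _

lemma cf_bracket_hi (hd4 : 4 ≤ d) (n : ℤ) (hn : (d:ℤ)+4 < n) :
    cf (bracket d (Cd d)) n = 0 := by
  rw [cf_bracket]
  apply Finset.sum_eq_zero
  intro s _
  rw [bracketTerm_eq]
  apply term_apply_eq_zero
  right
  set na := (Finset.univ.filter fun c : {c // c ∈ Cd d} => s c = true).card with hna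
  set nb := (Finset.univ.filter fun c : {c // c ∈ Cd d} => s c = false).card with hnb
  have hsum : na + nb = d := nbcard hd4 s
  have hg : Gamma d (Cd d) s ≤ nb + 3 := gamma_le_nb3 hd4 s
  have hk : ((Gamma d (Cd d) s - 1 : ℕ) : ℤ) ≤ (nb:ℤ) + 2 := by
    have : Gamma d (Cd d) s - 1 ≤ nb + 2 := by omega
    exact_mod_cast this
  omega

lemma cf_bracket_lo (hd4 : 4 ≤ d) (n : ℤ) (hn : n < -3*(d:ℤ)+4) :
    cf (bracket d (Cd d)) n = 0 := by
  rw [cf_bracket]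
  apply Finset.sum_eq_zero
  intro s _
  rw [bracketTerm_eq]
  apply term_apply_eq_zero
  left
  set na := (Finset.univ.filter fun c : {c // c ∈ Cd d} => s c = true).card with hna
  set nb := (Finset.univ.filter fun c : {c // c ∈ Cd d} => s c = false).card with hnb
  have hsum : na + nb = d := nbcard hd4 s
  have hg : Gamma d (Cd d) s ≤ d - 1 := gamma_le_dm1 hd4
  omega

lemma cf_bracket_top (hd4 : 4 ≤ d) (hd : Even d) :
    cf (bracket d (Cd d)) ((d:ℤ)+4) = 1 := by
  rw [cf_bracket]
  rw [Finset.sum_eq_single (fun _ => true)]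
  · have hg : Gamma d (Cd d) (fun _ => true) = 3 :=
      le_antisymm (gammaA_le hd4 (fun _ => rfl)) (gammaA_ge hd4 hd (fun _ => rfl))
    rw [bracketTerm_eq]
    have hna : (Finset.univ.filter
        fun c : {c // c ∈ Cd d} => (fun _ => true) c = true).card = d := by
      rw [Finset.filter_true_of_mem (fun _ _ => rfl), Finset.card_univ]
      exact card_subtype hd4
    have hnb : (Finset.univ.filter
        fun c : {c // c ∈ Cd d} => (fun _ => true) c = false).card = 0 := by
      rw [Finset.card_eq_zero, Finset.filter_eq_empty_iff]
      intro c _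
      simp
    rw [hg, hna, hnb]
    have h := term_apply_top ((d:ℤ) - (0:ℕ)) (3-1)
    have he : ((d:ℤ) - ((0:ℕ):ℤ)) + 2*((3-1 : ℕ):ℤ) = (d:ℤ)+4 := by norm_num
    rw [he] at h
    rw [h]
    norm_num
  · intro s _ hs
    have hex : ∃ c, s c = false := by
      by_contra h
      push_neg at h
      apply hs
      funext c
      cases hv : s c with
      | true => rfl
      | false => exact absurd hv (h c)
    rw [bracketTerm_eq]
    apply term_apply_eq_zero
    right
    set na := (Finset.univ.filter fun c : {c // c ∈ Cd d} => s c = true).card with hna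
    set nb := (Finset.univ.filter fun c : {c // c ∈ Cd d} => s c = false).card with hnb
    have hsum : na + nb = d := nbcard hd4 s
    have hg : Gamma d (Cd d) s ≤ nb + 2 := gamma_le_nb hd4 hex
    have hk : ((Gamma d (Cd d) s - 1 : ℕ) : ℤ) ≤ (nb:ℤ) + 1 := by
      have : Gamma d (Cd d) s - 1 ≤ nb + 1 := by omega
      exact_mod_cast this
    omega
  · intro h
    exact absurd (Finset.mem_univ _) h

lemma cf_bracket_bot (hd4 : 4 ≤ d) (hd : Even d) :
    cf (bracket d (Cd d)) (-3*(d:ℤ)+4) = 1 := by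
  rw [cf_bracket]
  rw [Finset.sum_eq_single (fun _ => false)]
  · have hg : Gamma d (Cd d) (fun _ => false) = d - 1 :=
      le_antisymm (gammaB_le hd4) (gammaB_ge hd4 (fun _ => rfl))
    rw [bracketTerm_eq]
    have hna : (Finset.univ.filter
        fun c : {c // c ∈ Cd d} => (fun _ => false) c = true).card = 0 := by
      rw [Finset.card_eq_zero, Finset.filter_eq_empty_iff]
      intro c _
      simp
    have hnb : (Finset.univ.filter
        fun c : {c // c ∈ Cd d} => (fun _ => false) c = false).card = d := by
      rw [Finset.filter_true_of_mem (fun _ _ => rfl), Finset.card_univ]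
      exact card_subtype hd4
    rw [hg, hna, hnb]
    have h := term_apply_bot (((0:ℕ):ℤ) - (d:ℤ)) (d - 1 - 1)
    have he : (((0:ℕ):ℤ) - (d:ℤ)) - 2*((d-1-1 : ℕ):ℤ) = -3*(d:ℤ)+4 := by
      have : ((d-1-1 : ℕ):ℤ) = (d:ℤ) - 2 := by omega
      rw [this]; ring
    rw [he] at h
    rw [h]
    have heven : Even (d - 1 - 1) := by
      obtain ⟨m, hm⟩ := hd
      exact ⟨m-1, by omega⟩
    exact heven.neg_one_pow
  · intro s _ hs
    have hex : ∃ c, s c = true := by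
      by_contra h
      push_neg at h
      apply hs
      funext c
      cases hv : s c with
      | false => rfl
      | true => exact absurd hv (h c)
    rw [bracketTerm_eq]
    apply term_apply_eq_zero
    left
    set na := (Finset.univ.filter fun c : {c // c ∈ Cd d} => s c = true).card with hna
    set nb := (Finset.univ.filter fun c : {c // c ∈ Cd d} => s c = false).card with hnb
    have hsum : na + nb = d := nbcard hd4 s
    have hnb_lt : nb < d := by
      obtain ⟨c, hc⟩ := hex
      have : c ∈ Finset.univ.filter fun c : {c // c ∈ Cd d} => s c = true :=
        Finset.mem_filter.2 ⟨Finset.mem_univ _, hc⟩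
      have hpos : 0 < na := Finset.card_pos.2 ⟨c, this⟩
      omega
    have hg : Gamma d (Cd d) s ≤ d - 1 := gamma_le_dm1 hd4
    omega
  · intro h
    exact absurd (Finset.mem_univ _) h

end bracketcoeffs

end SpanBr

/-- for even `d ≥ 4` and
`C(d) = {(1,d), (d+1,2d)} ∪ {(2d-i, i+1) : 1 ≤ i ≤ d-2}`, the bracket `⟨C(d)⟩` is nonzero,
has maximal exponent `d+4`, minimal exponent `-3d+4`, and span `4d`. -/
theorem span_bracket_Ceven (d : ℕ) (hd4 : 4 ≤ d) (hd : Even d) :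
    bracket d
        (insert ((1 : ℤ), (d : ℤ))
          (insert ((d : ℤ) + 1, 2 * (d : ℤ))
            ((Finset.Icc 1 (d - 2)).image fun i : ℕ => (2 * (d : ℤ) - i, (i : ℤ) + 1)))) ≠ 0 ∧
    maxDeg (bracket d
        (insert ((1 : ℤ), (d : ℤ))
          (insert ((d : ℤ) + 1, 2 * (d : ℤ))
            ((Finset.Icc 1 (d - 2)).image fun i : ℕ => (2 * (d : ℤ) - i, (i : ℤ) + 1)))))
      = (d : ℤ) + 4 ∧
    minDeg (bracket d
        (insert ((1 : ℤ), (d : ℤ))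
          (insert ((d : ℤ) + 1, 2 * (d : ℤ))
            ((Finset.Icc 1 (d - 2)).image fun i : ℕ => (2 * (d : ℤ) - i, (i : ℤ) + 1)))))
      = -3 * (d : ℤ) + 4 ∧
    spanL (bracket d
        (insert ((1 : ℤ), (d : ℤ))
          (insert ((d : ℤ) + 1, 2 * (d : ℤ))
            ((Finset.Icc 1 (d - 2)).image fun i : ℕ => (2 * (d : ℤ) - i, (i : ℤ) + 1)))))
      = 4 * d := by
  have hC : (insert ((1 : ℤ), (d : ℤ))
      (insert ((d : ℤ) + 1, 2 * (d : ℤ))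
        ((Finset.Icc 1 (d - 2)).image fun i : ℕ => (2 * (d : ℤ) - i, (i : ℤ) + 1)))) =
      SpanBr.Cd d := rfl
  rw [hC]
  set f := bracket d (SpanBr.Cd d) with hf
  have htop : SpanBr.cf f ((d:ℤ)+4) = 1 := SpanBr.cf_bracket_top hd4 hd
  have hbot : SpanBr.cf f (-3*(d:ℤ)+4) = 1 := SpanBr.cf_bracket_bot hd4 hd
  have hmemtop : ((d:ℤ)+4) ∈ f.coeff.support := by
    rw [Finsupp.mem_support_iff]
    exact fun h => by rw [show f.coeff ((d:ℤ)+4) = SpanBr.cf f ((d:ℤ)+4) from rfl, htop] at h; exact one_ne_zero h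
  have hmembot : (-3*(d:ℤ)+4) ∈ f.coeff.support := by
    rw [Finsupp.mem_support_iff]
    exact fun h => by rw [show f.coeff (-3*(d:ℤ)+4) = SpanBr.cf f (-3*(d:ℤ)+4) from rfl, hbot] at h; exact one_ne_zero h
  have hub : ∀ n ∈ f.coeff.support, n ≤ (d:ℤ)+4 := by
    intro n hn
    by_contra hgt
    push_neg at hgt
    rw [Finsupp.mem_support_iff] at hn
    exact hn (SpanBr.cf_bracket_hi hd4 n hgt)
  have hlb : ∀ n ∈ f.coeff.support, -3*(d:ℤ)+4 ≤ n := by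
    intro n hn
    by_contra hgt
    push_neg at hgt
    rw [Finsupp.mem_support_iff] at hn
    exact hn (SpanBr.cf_bracket_lo hd4 n hgt)
  have hmax : f.coeff.support.max = ((d:ℤ)+4 : ℤ) := by
    apply le_antisymm
    · exact Finset.max_le (fun a ha => WithBot.coe_le_coe.2 (hub a ha))
    · exact Finset.le_max hmemtop
  have hmin : f.coeff.support.min = ((-3*(d:ℤ)+4 : ℤ) : WithTop ℤ) := by
    apply le_antisymm
    · exact Finset.min_le hmembot
    · exact Finset.le_min (fun a ha => WithTop.coe_le_coe.2 (hlb a ha))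
  have hMd : maxDeg f = (d:ℤ)+4 := by
    rw [maxDeg, hmax]; rfl
  have hmd : minDeg f = -3*(d:ℤ)+4 := by
    rw [minDeg, hmin]; rfl
  refine ⟨?_, hMd, hmd, ?_⟩
  · intro h
    rw [h] at htop
    have : SpanBr.cf (0 : LaurentPolynomial ℤ) ((d:ℤ)+4) = 0 := rfl
    rw [this] at htop
    exact one_ne_zero htop.symm
  · rw [spanL, hMd, hmd]
    ring
end

section
/- Let C be an oriented linear chord diagram of d chords such that Γ_{s_A} + Γ_{s_B} = d + 2, where s_A (resp. s_B) denotes the state of C sending every chord to A (resp. to B). Then for every chord (i,j) of C, the integers i and j have different parity. -/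
open Equiv LaurentPolynomial Finset

namespace Parity17

open Module MulAction

/-- `ZMod 2`-valued indicator of an arbitrary proposition. -/
noncomputable def ind (P : Prop) : ZMod 2 := @ite _ P (Classical.propDecidable P) 1 0

lemma ind_pos {P : Prop} (h : P) : ind P = 1 := by simp [ind, h]

lemma ind_neg {P : Prop} (h : ¬ P) : ind P = 0 := by simp [ind, h]

lemma ind_congr {P Q : Prop} (h : P ↔ Q) : ind P = ind Q := by
  by_cases hP : P
  · rw [ind_pos hP, ind_pos (h.mp hP)]
  · rw [ind_neg hP, ind_neg (fun hq => hP (h.mpr hq))]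

lemma ind_mul (P : Prop) (x : ZMod 2) : ind P * x = @ite _ P (Classical.propDecidable P) x 0 := by
  by_cases hP : P <;> simp [ind, hP]

/-- Basic structural facts extracted from `IsOLCD`. -/
structure Facts (d : ℕ) (C : Finset (ℤ × ℤ)) : Prop where
  injf : Set.InjOn Prod.fst (C : Set (ℤ × ℤ))
  injs : Set.InjOn Prod.snd (C : Set (ℤ × ℤ))
  disj : Disjoint (C.image Prod.fst) (C.image Prod.snd)
  cover : C.image Prod.fst ∪ C.image Prod.snd = Finset.Icc 1 (2 * (d : ℤ))
  cardC : C.card = d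

lemma facts_of {d : ℕ} {C : Finset (ℤ × ℤ)} (hC : IsOLCD d C) : Facts d C := by
  obtain ⟨hcard, hcover⟩ := hC
  have h1 : (C.image Prod.fst).card ≤ d := le_trans Finset.card_image_le hcard.le
  have h2 : (C.image Prod.snd).card ≤ d := le_trans Finset.card_image_le hcard.le
  have hU : (C.image Prod.fst ∪ C.image Prod.snd).card = 2 * d := by
    rw [hcover, Int.card_Icc]
    omega
  have hle := Finset.card_union_le (C.image Prod.fst) (C.image Prod.snd)
  have e1 : (C.image Prod.fst).card = C.card := by omega
  have e2 : (C.image Prod.snd).card = C.card := by omega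
  refine ⟨Finset.card_image_iff.mp e1, Finset.card_image_iff.mp e2, ?_, hcover, hcard⟩
  exact Finset.card_union_eq_card_add_card.mp (by omega)

variable {d : ℕ} {C : Finset (ℤ × ℤ)}

lemma Facts.mem1 (F : Facts d C) {c : ℤ × ℤ} (hc : c ∈ C) :
    c.1 ∈ Finset.Icc (1 : ℤ) (2 * (d : ℤ)) :=
  F.cover ▸ Finset.mem_union_left _ (Finset.mem_image_of_mem _ hc)

lemma Facts.mem2 (F : Facts d C) {c : ℤ × ℤ} (hc : c ∈ C) :
    c.2 ∈ Finset.Icc (1 : ℤ) (2 * (d : ℤ)) :=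
  F.cover ▸ Finset.mem_union_right _ (Finset.mem_image_of_mem _ hc)

lemma Facts.ne12 (F : Facts d C) {c : ℤ × ℤ} (hc : c ∈ C) : c.1 ≠ c.2 := by
  intro h
  exact Finset.disjoint_left.mp F.disj (Finset.mem_image_of_mem _ hc)
    (h ▸ Finset.mem_image_of_mem _ hc)

lemma Facts.distinct4 (F : Facts d C) {c k : ℤ × ℤ} (hc : c ∈ C) (hk : k ∈ C) (hne : c ≠ k) :
    c.1 ≠ k.1 ∧ c.1 ≠ k.2 ∧ c.2 ≠ k.1 ∧ c.2 ≠ k.2 := by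
  refine ⟨fun h => hne (F.injf hc hk h), fun h => ?_, fun h => ?_, fun h => hne (F.injs hc hk h)⟩
  · exact Finset.disjoint_left.mp F.disj (Finset.mem_image_of_mem _ hc)
      (h ▸ Finset.mem_image_of_mem _ hk)
  · exact Finset.disjoint_left.mp F.disj (Finset.mem_image_of_mem _ hk)
      (h ▸ Finset.mem_image_of_mem _ hc)

lemma Facts.point_exists (F : Facts d C) {p : ℤ} (hp : p ∈ Finset.Icc (1 : ℤ) (2 * (d : ℤ))) :
    ∃ c, ∃ _ : c ∈ C, p = c.1 ∨ p = c.2 := by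
  rw [← F.cover, Finset.mem_union] at hp
  rcases hp with hp | hp
  · obtain ⟨c, hc, hcp⟩ := Finset.mem_image.mp hp
    exact ⟨c, hc, Or.inl hcp.symm⟩
  · obtain ⟨c, hc, hcp⟩ := Finset.mem_image.mp hp
    exact ⟨c, hc, Or.inr hcp.symm⟩

/-- The weighted endpoint-sum lemma: summing a function over the endpoints of all chords
that lie in `S ⊆ {1,…,2d}` is the same as summing over `S`. -/
lemma Facts.sum_endpoints (F : Facts d C) (S : Finset ℤ)
    (hS : S ⊆ Finset.Icc (1 : ℤ) (2 * (d : ℤ))) (g : ℤ → ZMod 2) :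
    ∑ c ∈ C, ((if c.1 ∈ S then g c.1 else 0) + (if c.2 ∈ S then g c.2 else 0))
      = ∑ p ∈ S, g p := by
  rw [Finset.sum_add_distrib]
  have e1 : ∑ p ∈ C.image Prod.fst, (if p ∈ S then g p else 0)
      = ∑ c ∈ C, (if c.1 ∈ S then g c.1 else 0) := by
    refine Finset.sum_image (fun x hx y hy h => F.injf ?_ ?_ h) <;> simpa
  have e2 : ∑ p ∈ C.image Prod.snd, (if p ∈ S then g p else 0)
      = ∑ c ∈ C, (if c.2 ∈ S then g c.2 else 0) := by
    refine Finset.sum_image (fun x hx y hy h => F.injs ?_ ?_ h) <;> simpa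
  rw [← e1, ← e2, Finset.sum_ite_mem, Finset.sum_ite_mem,
    ← Finset.sum_union (F.disj.mono Finset.inter_subset_left Finset.inter_subset_left),
    ← Finset.union_inter_distrib_right, F.cover, Finset.inter_eq_right.mpr hS]

section State

variable (s : {c // c ∈ C} → Bool)

/-- Membership of the four generating transpositions, per chord, per state branch. -/
lemma swap_mem_X1 (c : {c // c ∈ C}) (h : s c = decide (c.1.1 < c.1.2)) :
    Equiv.swap c.1.1 (c.1.2 - 1) ∈ stateGroup C s :=
  Subgroup.subset_closure (Set.mem_iUnion.mpr ⟨c, by rw [Rset, if_pos h]; exact Set.mem_insert _ _⟩)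

lemma swap_mem_X2 (c : {c // c ∈ C}) (h : s c = decide (c.1.1 < c.1.2)) :
    Equiv.swap (c.1.1 - 1) c.1.2 ∈ stateGroup C s :=
  Subgroup.subset_closure (Set.mem_iUnion.mpr
    ⟨c, by rw [Rset, if_pos h]; exact Set.mem_insert_of_mem _ rfl⟩)

lemma swap_mem_Y1 (c : {c // c ∈ C}) (h : ¬ s c = decide (c.1.1 < c.1.2)) :
    Equiv.swap c.1.1 c.1.2 ∈ stateGroup C s :=
  Subgroup.subset_closure (Set.mem_iUnion.mpr ⟨c, by rw [Rset, if_neg h]; exact Set.mem_insert _ _⟩)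

lemma swap_mem_Y2 (c : {c // c ∈ C}) (h : ¬ s c = decide (c.1.1 < c.1.2)) :
    Equiv.swap (c.1.1 - 1) (c.1.2 - 1) ∈ stateGroup C s :=
  Subgroup.subset_closure (Set.mem_iUnion.mpr
    ⟨c, by rw [Rset, if_neg h]; exact Set.mem_insert_of_mem _ rfl⟩)

/-- If the swap of `u` and `v` lies in a subgroup `G`, then `u` and `v` lie in the same
`G`-orbits. -/
lemma orbit_mem_congr {G : Subgroup (Perm ℤ)} {u v : ℤ} (h : Equiv.swap u v ∈ G) (z : ℤ) :
    u ∈ orbit G z ↔ v ∈ orbit G z := by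
  have key : ∀ x y : ℤ, Equiv.swap x y ∈ G → x ∈ orbit G z → y ∈ orbit G z := by
    intro x y hxy hx
    obtain ⟨g, hg⟩ := MulAction.mem_orbit_iff.mp hx
    refine MulAction.mem_orbit_iff.mpr ⟨(⟨Equiv.swap x y, hxy⟩ : G) * g, ?_⟩
    rw [mul_smul, hg]
    show Equiv.swap x y x = y
    exact Equiv.swap_apply_left x y
  constructor
  · exact key u v h
  · exact key v u (by rwa [Equiv.swap_comm])

/-- A function `f : ℤ → ZMod 2` respects the state group if swaps in the group identify
its values.  Orbit indicators have this property. -/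
def Respects (f : ℤ → ZMod 2) : Prop :=
  ∀ u v : ℤ, Equiv.swap u v ∈ stateGroup C s → f u = f v

lemma respects_ind_orbit (z : ℤ) :
    Respects s (fun p => ind (p ∈ orbit (stateGroup C s) z)) := by
  intro u v h
  exact ind_congr (orbit_mem_congr h z)

/-- The two-sided pairing identity at a chord: `f i + f (i-1) = f j + f (j-1)`. -/
lemma pair_eq {f : ℤ → ZMod 2} (hf : Respects s f) (c : {c // c ∈ C}) :
    f c.1.1 + f (c.1.1 - 1) = f c.1.2 + f (c.1.2 - 1) := by
  by_cases hs : s c = decide (c.1.1 < c.1.2)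
  · rw [hf _ _ (swap_mem_X1 s c hs), hf _ _ (swap_mem_X2 s c hs)]
    exact add_comm _ _
  · rw [hf _ _ (swap_mem_Y1 s c hs), hf _ _ (swap_mem_Y2 s c hs)]

end State

/-- The "interlacement-count" entry: the parity of the number of endpoints of `k`
strictly between the endpoints of `c`. -/
noncomputable def tent (c k : ℤ × ℤ) : ZMod 2 :=
  ind (k.1 ∈ Finset.Ioo (min c.1 c.2) (max c.1 c.2)) +
    ind (k.2 ∈ Finset.Ioo (min c.1 c.2) (max c.1 c.2))

/-- Diagonal entry: `0` for an `X`-type smoothing, `1` for a `Y`-type smoothing. -/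
noncomputable def Dterm (b : Bool) (c : ℤ × ℤ) : ZMod 2 :=
  if b = decide (c.1 < c.2) then 0 else 1

/-- The state matrix `T + D` over `GF(2)`. -/
noncomputable def Mmat (C : Finset (ℤ × ℤ)) (s : {c // c ∈ C} → Bool) :
    Matrix {c // c ∈ C} {c // c ∈ C} (ZMod 2) :=
  fun c k => (if c = k then Dterm (s c) c.1 else 0) + tent c.1 k.1

lemma tent_self {c : ℤ × ℤ} (h : c.1 ≠ c.2) : tent c c = 0 := by
  rw [tent, ind_neg, ind_neg, add_zero]
  · rw [Finset.mem_Ioo]; omega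
  · rw [Finset.mem_Ioo]; omega

/-- Telescoping sum over an open integer interval. -/
lemma telescope (f : ℤ → ZMod 2) (a : ℤ) :
    ∀ b : ℤ, a < b → ∑ p ∈ Finset.Ioo a b, (f p + f (p - 1)) = f (b - 1) + f a := by
  have hx : ∀ x y z : ZMod 2, (x + y) + (y + z) = x + z := by decide
  have hself : ∀ x : ZMod 2, x + x = 0 := by decide
  have main : ∀ b : ℤ, a + 1 ≤ b →
      ∑ p ∈ Finset.Ioo a b, (f p + f (p - 1)) = f (b - 1) + f a := by
    refine Int.le_induction ?_ ?_
    · have he : Finset.Ioo a (a + 1) = ∅ := by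
        ext p; simp only [Finset.mem_Ioo, Finset.notMem_empty, iff_false]; omega
      have he2 : a + 1 - 1 = a := by ring
      rw [he, Finset.sum_empty, he2, hself]
    · intro n hn ih
      have hins : Finset.Ioo a (n + 1) = insert n (Finset.Ioo a n) := by
        ext p; simp only [Finset.mem_Ioo, Finset.mem_insert]; omega
      rw [hins, Finset.sum_insert (by simp [Finset.mem_Ioo]), ih]
      have he2 : n + 1 - 1 = n := by ring
      rw [he2, hx]
  exact fun b hb => main b (by omega)

section RowZero

variable (s : {c // c ∈ C} → Bool)

/-- The core computation: each "orbit-respecting" vector is annihilated by the state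
matrix. -/
lemma row_zero (F : Facts d C) {f : ℤ → ZMod 2} (hf : Respects s f) (c : {c // c ∈ C}) :
    ∑ k : {c // c ∈ C}, Mmat C s c k * (f k.1.1 + f (k.1.1 - 1)) = 0 := by
  classical
  have hself : ∀ x : ZMod 2, x + x = 0 := by decide
  set a := min c.1.1 c.1.2 with ha
  set b := max c.1.1 c.1.2 with hb
  have hne : c.1.1 ≠ c.1.2 := F.ne12 c.2
  have hab : a < b := by omega
  have h1d : (1 : ℤ) ≤ c.1.1 ∧ c.1.1 ≤ 2 * d := Finset.mem_Icc.mp (F.mem1 c.2)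
  have h2d : (1 : ℤ) ≤ c.1.2 ∧ c.1.2 ≤ 2 * d := Finset.mem_Icc.mp (F.mem2 c.2)
  -- split off the diagonal term
  have split : ∀ k : {c // c ∈ C},
      Mmat C s c k * (f k.1.1 + f (k.1.1 - 1))
        = (if c = k then Dterm (s c) c.1 * (f c.1.1 + f (c.1.1 - 1)) else 0)
          + tent c.1 k.1 * (f k.1.1 + f (k.1.1 - 1)) := by
    intro k
    rw [Mmat, add_mul]
    congr 1
    by_cases hck : c = k
    · subst hck; rw [if_pos rfl, if_pos rfl]
    · rw [if_neg hck, if_neg hck, zero_mul]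
  rw [Finset.sum_congr rfl (fun k _ => split k), Finset.sum_add_distrib,
    Finset.sum_ite_eq Finset.univ c
      (fun _ => Dterm (s c) c.1 * (f c.1.1 + f (c.1.1 - 1))), if_pos (Finset.mem_univ c)]
  -- compute the off-diagonal sum by reindexing over points
  have hterm : ∀ k : {c // c ∈ C},
      tent c.1 k.1 * (f k.1.1 + f (k.1.1 - 1))
        = (if k.1.1 ∈ Finset.Ioo a b then (f k.1.1 + f (k.1.1 - 1)) else 0)
          + (if k.1.2 ∈ Finset.Ioo a b then (f k.1.2 + f (k.1.2 - 1)) else 0) := by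
    intro k
    rw [tent, add_mul, ind_mul, ind_mul]
    congr 1
    · by_cases hm : k.1.1 ∈ Finset.Ioo a b
      · rw [if_pos hm, if_pos hm]
      · rw [if_neg hm, if_neg hm]
    · by_cases hm : k.1.2 ∈ Finset.Ioo a b
      · rw [if_pos hm, if_pos hm, pair_eq s hf k]
      · rw [if_neg hm, if_neg hm]
  rw [Finset.sum_congr rfl (fun k _ => hterm k)]
  have hsub : Finset.Ioo a b ⊆ Finset.Icc (1 : ℤ) (2 * (d : ℤ)) := by
    intro p hp
    rw [Finset.mem_Ioo] at hp
    rw [Finset.mem_Icc]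
    omega
  rw [Finset.sum_coe_sort C
    (fun k => (if k.1 ∈ Finset.Ioo a b then (f k.1 + f (k.1 - 1)) else 0)
      + (if k.2 ∈ Finset.Ioo a b then (f k.2 + f (k.2 - 1)) else 0)),
    F.sum_endpoints _ hsub (fun p => f p + f (p - 1)), telescope f a b hab]
  -- final case analysis on the state of chord `c`
  by_cases hs : s c = decide (c.1.1 < c.1.2)
  · rw [Dterm, if_pos hs, zero_mul, zero_add]
    rcases lt_or_gt_of_ne hne with hlt | hgt
    · have hfa : f a = f c.1.1 := by rw [ha, min_eq_left hlt.le]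
      have hfb : f (b - 1) = f (c.1.2 - 1) := by rw [hb, max_eq_right hlt.le]
      rw [hfa, hfb, hf _ _ (swap_mem_X1 s c hs), hself]
    · have hfa : f a = f c.1.2 := by rw [ha, min_eq_right hgt.le]
      have hfb : f (b - 1) = f (c.1.1 - 1) := by rw [hb, max_eq_left hgt.le]
      rw [hfa, hfb, hf _ _ (swap_mem_X2 s c hs), hself]
  · rw [Dterm, if_neg hs, one_mul]
    have h4 : ∀ x y : ZMod 2, (x + y) + (y + x) = 0 := by decide
    rcases lt_or_gt_of_ne hne with hlt | hgt
    · have hfa : f a = f c.1.1 := by rw [ha, min_eq_left hlt.le]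
      have hfb : f (b - 1) = f (c.1.2 - 1) := by rw [hb, max_eq_right hlt.le]
      rw [hfa, hfb, hf _ _ (swap_mem_Y2 s c hs)]
      exact h4 _ _
    · have hfa : f a = f c.1.2 := by rw [ha, min_eq_right hgt.le]
      have hfb : f (b - 1) = f (c.1.1 - 1) := by rw [hb, max_eq_left hgt.le]
      rw [hfa, hfb, hf _ _ (swap_mem_Y1 s c hs)]
      exact h4 _ _

end RowZero


section MainInequality

/-- Main inequality: `Γ_s ≤ corank (T + D_s) + 1` over `GF(2)`. -/
theorem gamma_le_corank (hC : IsOLCD d C) (s : {c // c ∈ C} → Bool) :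
    Gamma d C s ≤
      Module.finrank (ZMod 2) (LinearMap.ker (Matrix.mulVecLin (Mmat C s))) + 1 := by
  classical
  have F := facts_of hC
  set O : Set (Set ℤ) :=
    (fun x : ℤ => MulAction.orbit (stateGroup C s) x) '' Set.Icc (0 : ℤ) (2 * d) with hO
  have hfin : O.Finite := (Set.finite_Icc _ _).image _
  haveI : Fintype O := hfin.fintype
  set A : Matrix {c // c ∈ C} O (ZMod 2) :=
    fun c κ => ind (c.1.1 ∈ κ.1) + ind (c.1.1 - 1 ∈ κ.1) with hA
  have hGamma : Gamma d C s = Fintype.card O := by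
    have h0 : Gamma d C s = O.ncard := rfl
    rw [h0, ← Nat.card_coe_set_eq, Nat.card_eq_fintype_card]
  have hone : ∀ p : ℤ, p ∈ Set.Icc (0 : ℤ) (2 * (d : ℤ)) →
      (MulAction.orbit (stateGroup C s) p) ∈ O := fun p hp => ⟨p, hp, rfl⟩
  -- `M * A = 0` : every column of `A` lies in the kernel of `M`.
  have hMA : Mmat C s * A = 0 := by
    ext c κ
    rw [Matrix.mul_apply, Matrix.zero_apply]
    obtain ⟨z, _, hzz⟩ := κ.2
    have hcongr : ∀ k : {c // c ∈ C}, A k κ =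
        ind (k.1.1 ∈ MulAction.orbit (stateGroup C s) z)
          + ind (k.1.1 - 1 ∈ MulAction.orbit (stateGroup C s) z) := by
      intro k
      rw [hA]
      simp only
      rw [← hzz]
    calc ∑ k : {c // c ∈ C}, Mmat C s c k * A k κ
        = ∑ k : {c // c ∈ C}, Mmat C s c k *
            ((fun p => ind (p ∈ MulAction.orbit (stateGroup C s) z)) k.1.1
              + (fun p => ind (p ∈ MulAction.orbit (stateGroup C s) z)) (k.1.1 - 1)) := by
          exact Finset.sum_congr rfl (fun k _ => by rw [hcongr k])
      _ = 0 := row_zero s F (respects_ind_orbit s z) c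
  have hrange : LinearMap.range (Matrix.mulVecLin A) ≤
      LinearMap.ker (Matrix.mulVecLin (Mmat C s)) := by
    rintro v ⟨w, rfl⟩
    rw [LinearMap.mem_ker, Matrix.mulVecLin_apply, Matrix.mulVecLin_apply,
      Matrix.mulVec_mulVec, hMA, Matrix.zero_mulVec]
  have hker : LinearMap.ker (Matrix.mulVecLin A) ≤
      Submodule.span (ZMod 2) {(fun _ => 1 : O → ZMod 2)} := by
    intro w hw
    rw [LinearMap.mem_ker, Matrix.mulVecLin_apply] at hw
    set h : ℤ → ZMod 2 := fun p => ∑ κ : O, w κ * ind (p ∈ κ.1) with hh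
    have hresp : Respects s h := by
      intro u v huv
      rw [hh]
      refine Finset.sum_congr rfl (fun κ _ => ?_)
      obtain ⟨z, _, hzz⟩ := κ.2
      have hiv := respects_ind_orbit s z u v huv
      simp only at hiv
      rw [← hzz, hiv]
    have hsingle : ∀ p : ℤ, ∀ hp : p ∈ Set.Icc (0 : ℤ) (2 * (d : ℤ)),
        h p = w ⟨_, hone p hp⟩ := by
      intro p hp
      rw [show h p = ∑ κ : O, w κ * ind (p ∈ κ.1) from rfl]
      rw [Finset.sum_eq_single (⟨_, hone p hp⟩ : O)]
      · rw [ind_pos (MulAction.mem_orbit_self p), mul_one]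
      · intro κ _ hne
        obtain ⟨z, _, hzz⟩ := κ.2
        have hnot : p ∉ κ.1 := by
          intro hpk
          apply hne
          apply Subtype.ext
          show κ.1 = MulAction.orbit (stateGroup C s) p
          rw [← hzz] at hpk ⊢
          exact (MulAction.orbit_eq_iff.mpr hpk).symm
        rw [ind_neg hnot, mul_zero]
      · intro hni; exact absurd (Finset.mem_univ _) hni
    have hpair : ∀ c : {c // c ∈ C}, h c.1.1 + h (c.1.1 - 1) = 0 := by
      intro c
      have e : h c.1.1 + h (c.1.1 - 1) = (A.mulVec w) c := by
        rw [Matrix.mulVec, dotProduct, hh, ← Finset.sum_add_distrib]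
        refine Finset.sum_congr rfl (fun κ _ => ?_)
        rw [hA]
        ring
      rw [e, hw, Pi.zero_apply]
    have hzero : ∀ x y : ZMod 2, x + y = 0 → x = y := by decide
    have hstep : ∀ p : ℤ, p ∈ Finset.Icc (1 : ℤ) (2 * (d : ℤ)) → h p = h (p - 1) := by
      intro p hp
      obtain ⟨c, hcC, hcp⟩ := F.point_exists hp
      have h1 := hpair ⟨c, hcC⟩
      have h2 := pair_eq s hresp (⟨c, hcC⟩ : {c // c ∈ C})
      simp only at h1 h2
      rcases hcp with rfl | rfl
      · exact hzero _ _ h1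
      · exact hzero _ _ (h2 ▸ h1)
    have hconst : ∀ q : ℤ, 0 ≤ q → (q ≤ 2 * (d : ℤ) → h q = h 0) := by
      refine Int.le_induction ?_ ?_
      · intro _; rfl
      · intro n hn ih hle
        have e1 : h (n + 1) = h n := by
          have := hstep (n + 1) (Finset.mem_Icc.mpr (by omega))
          have e : (n : ℤ) + 1 - 1 = n := by ring
          rwa [e] at this
        rw [e1]
        exact ih (by omega)
    rw [Submodule.mem_span_singleton]
    refine ⟨h 0, ?_⟩
    funext κ
    obtain ⟨z, hz, hzz⟩ := κ.2
    have hzIcc : (0 : ℤ) ≤ z ∧ z ≤ 2 * (d : ℤ) := hz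
    have e1 : h z = w κ := by
      rw [hsingle z hz]
      congr 1
      exact Subtype.ext hzz
    have e2 : h z = h 0 := hconst z hzIcc.1 hzIcc.2
    show h 0 * 1 = w κ
    rw [mul_one, ← e2, e1]
  -- dimension count
  have erk := LinearMap.finrank_range_add_finrank_ker (Matrix.mulVecLin A)
  have edom : Module.finrank (ZMod 2) (O → ZMod 2) = Fintype.card O :=
    Module.finrank_pi (ZMod 2)
  have hrk : Module.finrank (ZMod 2) (LinearMap.range (Matrix.mulVecLin A)) ≤
      Module.finrank (ZMod 2) (LinearMap.ker (Matrix.mulVecLin (Mmat C s))) :=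
    Submodule.finrank_mono hrange
  have hkr : Module.finrank (ZMod 2) (LinearMap.ker (Matrix.mulVecLin A)) ≤ 1 := by
    have h1 := Submodule.finrank_mono hker
    have h2 := finrank_span_le_card (R := ZMod 2) ({(fun _ => 1 : O → ZMod 2)} : Set (O → ZMod 2))
    simp only [Set.toFinset_singleton, Finset.card_singleton] at h2
    omega
  rw [hGamma]
  omega

end MainInequality


section Endgame

lemma Dterm_flip (c : ℤ × ℤ) : Dterm false c = Dterm true c + 1 := by
  rw [Dterm, Dterm]
  by_cases hlt : c.1 < c.2
  · have hd : decide (c.1 < c.2) = true := by simpa using hlt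
    rw [hd]
    decide
  · have hd : decide (c.1 < c.2) = false := by simpa using hlt
    rw [hd]
    decide

lemma Mmat_flip : Mmat C (fun _ => false) = Mmat C (fun _ => true) + 1 := by
  ext c k
  rw [Matrix.add_apply, Matrix.one_apply, Mmat, Mmat]
  by_cases hck : c = k
  · rw [if_pos hck, if_pos hck, if_pos hck, Dterm_flip]
    ring
  · rw [if_neg hck, if_neg hck, if_neg hck]
    ring

lemma tent_symm (F : Facts d C) {c k : ℤ × ℤ} (hc : c ∈ C) (hk : k ∈ C) (hne : c ≠ k) :
    tent c k = tent k c := by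
  obtain ⟨h11, h12, h21, h22⟩ := F.distinct4 hc hk hne
  have hc12 := F.ne12 hc
  have hk12 := F.ne12 hk
  rw [tent, tent, ind_congr Finset.mem_Ioo, ind_congr Finset.mem_Ioo,
    ind_congr Finset.mem_Ioo, ind_congr Finset.mem_Ioo]
  by_cases p1 : min c.1 c.2 < k.1 ∧ k.1 < max c.1 c.2 <;>
  by_cases p2 : min c.1 c.2 < k.2 ∧ k.2 < max c.1 c.2 <;>
  by_cases q1 : min k.1 k.2 < c.1 ∧ c.1 < max k.1 k.2 <;>
  by_cases q2 : min k.1 k.2 < c.2 ∧ c.2 < max k.1 k.2 <;>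
  simp only [ind, p1, p2, q1, q2, if_true, if_false, ite_true, ite_false] <;>
  first
    | rfl
    | decide
    | (exfalso; omega)

end Endgame

end Parity17

/-- if `Γ_{s_A} + Γ_{s_B} = d + 2`, then for every chord `(i, j)` of `C`
the integers `i` and `j` have different parity (equivalently `i + j` is odd). -/
theorem parity_of_gamma_eq (d : ℕ) (C : Finset (ℤ × ℤ)) (hC : IsOLCD d C)
    (h : Gamma d C (fun _ => true) + Gamma d C (fun _ => false) = d + 2) :
    ∀ p ∈ C, Odd (p.1 + p.2) := by
  classical
  intro p hp
  have F := Parity17.facts_of hC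
  set MA := Parity17.Mmat C (fun _ => true) with hMAdef
  set MB := Parity17.Mmat C (fun _ => false) with hMBdef
  have hA := Parity17.gamma_le_corank hC (fun _ => true)
  have hB := Parity17.gamma_le_corank hC (fun _ => false)
  have hflip : MB = MA + 1 := Parity17.Mmat_flip
  have hchar : ∀ x y : ZMod 2, x + y = 0 → x = y := by decide
  rw [← hMAdef] at hA
  rw [← hMBdef] at hB
  have hinf : LinearMap.ker (Matrix.mulVecLin MA) ⊓ LinearMap.ker (Matrix.mulVecLin MB)
      = ⊥ := by
    rw [eq_bot_iff]
    intro v hv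
    rw [Submodule.mem_inf] at hv
    obtain ⟨h1, h2⟩ := hv
    rw [LinearMap.mem_ker, Matrix.mulVecLin_apply] at h1 h2
    rw [hflip, Matrix.add_mulVec, Matrix.one_mulVec, h1, zero_add] at h2
    simpa using h2
  have htop : Module.finrank (ZMod 2) ({c // c ∈ C} → ZMod 2) = d := by
    rw [Module.finrank_pi, Fintype.card_coe, hC.1]
  have hsup : LinearMap.ker (Matrix.mulVecLin MA) ⊔ LinearMap.ker (Matrix.mulVecLin MB)
      = ⊤ := by
    have hh := Submodule.finrank_sup_add_finrank_inf_eq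
      (LinearMap.ker (Matrix.mulVecLin MA)) (LinearMap.ker (Matrix.mulVecLin MB))
    rw [hinf, finrank_bot] at hh
    apply Submodule.eq_top_of_finrank_eq
    have hle := Submodule.finrank_le
      (LinearMap.ker (Matrix.mulVecLin MA) ⊔ LinearMap.ker (Matrix.mulVecLin MB))
    rw [htop] at hle ⊢
    omega
  have hproj : ∀ v : {c // c ∈ C} → ZMod 2,
      MA.mulVec (MA.mulVec v) = MA.mulVec v := by
    intro v
    have hv : v ∈ LinearMap.ker (Matrix.mulVecLin MA) ⊔
        LinearMap.ker (Matrix.mulVecLin MB) := by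
      rw [hsup]; exact Submodule.mem_top
    obtain ⟨y, hy, z, hz, rfl⟩ := Submodule.mem_sup.mp hv
    rw [LinearMap.mem_ker, Matrix.mulVecLin_apply] at hy hz
    rw [hflip, Matrix.add_mulVec, Matrix.one_mulVec] at hz
    have hz' : MA.mulVec z = z := by
      funext i
      exact hchar _ _ (congrFun hz i)
    rw [Matrix.mulVec_add, hy, zero_add, hz', hz']
  set c₀ : {c // c ∈ C} := ⟨p, hp⟩ with hc₀
  have hdiag : ∑ k : {c // c ∈ C}, MA c₀ k * MA k c₀ = MA c₀ c₀ := by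
    have hcol : MA.mulVec (Pi.single c₀ 1) = fun i => MA i c₀ := by
      funext i
      simp [Matrix.mulVec_single]
    have hpr := congrFun (hproj (Pi.single c₀ 1)) c₀
    rw [hcol] at hpr
    calc ∑ k : {c // c ∈ C}, MA c₀ k * MA k c₀
        = (MA.mulVec fun i => MA i c₀) c₀ := by
          rw [show (MA.mulVec fun i => MA i c₀) c₀
            = ∑ k : {c // c ∈ C}, MA c₀ k * MA k c₀ from by
              simp [Matrix.mulVec, dotProduct]]
      _ = (fun i => MA i c₀) c₀ := hpr
      _ = MA c₀ c₀ := rfl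
  have hsq : ∀ x : ZMod 2, x * x = x := by decide
  have htcc : Parity17.tent p p = 0 := Parity17.tent_self (F.ne12 hp)
  have hterm : ∀ k : {c // c ∈ C}, MA c₀ k * MA k c₀
      = (if c₀ = k then Parity17.Dterm true p else 0) + Parity17.tent p k.1 := by
    intro k
    by_cases hck : c₀ = k
    · have e1 : MA c₀ c₀ = Parity17.Dterm true p := by
        rw [hMAdef, Parity17.Mmat, if_pos rfl]
        show Parity17.Dterm true c₀.1 + Parity17.tent c₀.1 c₀.1 = _
        rw [hc₀]
        rw [htcc, add_zero]
      rw [← hck, if_pos rfl, e1, hsq]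
      rw [hc₀]
      rw [htcc, add_zero]
    · have hkp : k.1 ≠ p := by
        intro he
        exact hck (Subtype.ext he.symm)
      have e1 : MA c₀ k = Parity17.tent p k.1 := by
        rw [hMAdef, Parity17.Mmat, if_neg hck, zero_add]
      have e2 : MA k c₀ = Parity17.tent k.1 p := by
        rw [hMAdef, Parity17.Mmat, if_neg (fun he => hck he.symm)]
        rw [zero_add]
      rw [if_neg hck, zero_add, e1, e2, ← Parity17.tent_symm F hp k.2 (fun he => hkp (by rw [he])),
        hsq]
  have hsum0 : ∑ k : {c // c ∈ C}, Parity17.tent p k.1 = 0 := by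
    have e3 : MA c₀ c₀ = Parity17.Dterm true p + 0 := by
      rw [hMAdef, Parity17.Mmat, if_pos rfl]
      show Parity17.Dterm true c₀.1 + Parity17.tent c₀.1 c₀.1 = _
      rw [hc₀, htcc]
    have := hdiag
    rw [Finset.sum_congr rfl (fun k _ => hterm k), Finset.sum_add_distrib,
      Finset.sum_ite_eq Finset.univ c₀ (fun _ => Parity17.Dterm true p),
      if_pos (Finset.mem_univ c₀), e3] at this
    have hcan : ∀ x y : ZMod 2, x + y = x + 0 → y = 0 := by decide
    exact hcan _ _ this
  -- evaluate the sum of interlacement parities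
  have hform : ∀ c : ℤ × ℤ, Parity17.tent p c
      = (if c.1 ∈ Finset.Ioo (min p.1 p.2) (max p.1 p.2) then (1 : ZMod 2) else 0)
        + (if c.2 ∈ Finset.Ioo (min p.1 p.2) (max p.1 p.2) then (1 : ZMod 2) else 0) := by
    intro c
    rw [Parity17.tent]
    congr 1
    · by_cases hm : c.1 ∈ Finset.Ioo (min p.1 p.2) (max p.1 p.2) <;>
        simp [Parity17.ind_pos, Parity17.ind_neg, hm]
    · by_cases hm : c.2 ∈ Finset.Ioo (min p.1 p.2) (max p.1 p.2) <;>
        simp [Parity17.ind_pos, Parity17.ind_neg, hm]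
  have h1d := Finset.mem_Icc.mp (F.mem1 hp)
  have h2d := Finset.mem_Icc.mp (F.mem2 hp)
  have hsub : Finset.Ioo (min p.1 p.2) (max p.1 p.2) ⊆ Finset.Icc (1 : ℤ) (2 * (d : ℤ)) := by
    intro q hq
    rw [Finset.mem_Ioo] at hq
    rw [Finset.mem_Icc]
    omega
  have hcard : ((Finset.Ioo (min p.1 p.2) (max p.1 p.2)).card : ZMod 2) = 0 := by
    calc ((Finset.Ioo (min p.1 p.2) (max p.1 p.2)).card : ZMod 2)
        = ∑ _q ∈ Finset.Ioo (min p.1 p.2) (max p.1 p.2), (1 : ZMod 2) := by simp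
      _ = ∑ c ∈ C, ((if c.1 ∈ Finset.Ioo (min p.1 p.2) (max p.1 p.2) then (1 : ZMod 2) else 0)
            + (if c.2 ∈ Finset.Ioo (min p.1 p.2) (max p.1 p.2) then (1 : ZMod 2) else 0)) :=
          (F.sum_endpoints (Finset.Ioo (min p.1 p.2) (max p.1 p.2)) hsub (fun _ => 1)).symm
      _ = ∑ c ∈ C, Parity17.tent p c :=
          Finset.sum_congr rfl (fun c _ => (hform c).symm)
      _ = ∑ k : {c // c ∈ C}, Parity17.tent p k.1 :=
          (Finset.sum_coe_sort C (fun c => Parity17.tent p c)).symm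
      _ = 0 := hsum0
  rw [Int.card_Ioo] at hcard
  have hdvd : (2 : ℕ) ∣ (max p.1 p.2 - min p.1 p.2 - 1).toNat :=
    (ZMod.natCast_eq_zero_iff _ 2).mp hcard
  have hne := F.ne12 hp
  rw [Int.odd_iff]
  omega
end
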